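/- arXiv:2601.05025 — 5 statements merged into one kernel-verified Lean document; each statement's English description precedes it below -/
import Mathlib

section
/- Let A be a (nonzero) C*-algebra and let T : A → A be a positive bounded linear operator. Then the spectral radius r(T) is an element of the spectrum σ(T) of T. -/
open scoped ENNReal NNReal

section Series
variable {B : Type*} [NormedRing B] [NormedAlgebra ℂ B] [CompleteSpace B]

variable {B : Type*} [NormedRing B] [NormedAlgebra ℂ B] [CompleteSpace B]

/-- Resolvent Neumann series valid for `|z|` beyond the spectral radius. -/
lemma resolvent_series (a : B) {z : ℂ} (hz : spectralRadius ℂ a < ‖z‖₊) :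
    Summable (fun n : ℕ => ‖a ^ n‖ * ‖z‖⁻¹ ^ n) ∧
    IsUnit (algebraMap ℂ B z - a) ∧
    HasSum (fun n : ℕ => z⁻¹ ^ (n + 1) • a ^ n)
      (Ring.inverse (algebraMap ℂ B z - a)) := by
  have hz0 : z ≠ 0 := by
    rintro rfl
    simp at hz
  set w : ℂ := z⁻¹ with hw_def
  have hw : (‖w‖₊ : ℝ≥0∞) < (spectralRadius ℂ a)⁻¹ := by
    rw [hw_def, nnnorm_inv, ENNReal.coe_inv (by simpa using hz0)]
    exact ENNReal.inv_lt_inv.mpr hz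
  obtain ⟨r', hr'w, hr'⟩ := ENNReal.lt_iff_exists_nnreal_btwn.mp hw
  have hr'0 : 0 < r' := by
    have := (zero_le : (0 : ℝ≥0∞) ≤ ‖w‖₊).trans_lt hr'w
    exact_mod_cast this
  have Hball : HasFPowerSeriesOnBall (fun u : ℂ => Ring.inverse (1 - u • a))
      (fun n => ContinuousMultilinearMap.mkPiRing ℂ (Fin n) (a ^ n)) 0 r' :=
    (spectrum.hasFPowerSeriesOnBall_inverse_one_sub_smul ℂ a).exchange_radius
      ((spectrum.differentiableOn_inverse_one_sub_smul hr').hasFPowerSeriesOnBall hr'0)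
  have hsummable : Summable (fun n : ℕ => ‖a ^ n‖ * ‖z‖⁻¹ ^ n) := by
    have := FormalMultilinearSeries.summable_norm_mul_pow _
      (lt_of_lt_of_le hr'w Hball.r_le)
    simpa [hw_def, ContinuousMultilinearMap.norm_mkPiRing, norm_inv, inv_pow, map_inv₀] using this
  have hmem : w ∈ EMetric.ball (0 : ℂ) r' := by
    exact mem_emetric_ball_zero_iff.mpr hr'w
  have hu1 : IsUnit (1 - w • a) :=
    spectrum.isUnit_one_sub_smul_of_lt_inv_radius (hr'w.trans hr')
  have key_eq : algebraMap ℂ B z - a = z • (1 - w • a) := by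
    rw [smul_sub, smul_smul, mul_inv_cancel₀ hz0, one_smul,
      Algebra.algebraMap_eq_smul_one]
  obtain ⟨v, hv⟩ := hu1
  have hunit : IsUnit (algebraMap ℂ B z - a) := by
    rw [key_eq, ← hv]
    exact (Units.isUnit v).smul (Units.mk0 z hz0)
  have hmul : ∀ x y : B, (z • x) * (w • y) = (z * w) • (x * y) := fun x y => by
    rw [smul_mul_assoc, mul_smul_comm, smul_smul]
  have hmul' : ∀ x y : B, (w • x) * (z • y) = (w * z) • (x * y) := fun x y => by
    rw [smul_mul_assoc, mul_smul_comm, smul_smul]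
  have hinv : Ring.inverse (algebraMap ℂ B z - a) = w • Ring.inverse (1 - w • a) := by
    rw [← hv, Ring.inverse_unit]
    have h1 : (algebraMap ℂ B z - a) * (w • ((v⁻¹ : Bˣ) : B)) = 1 := by
      rw [key_eq, ← hv, hmul, mul_inv_cancel₀ hz0, one_smul, Units.mul_inv]
    have h2 : (w • ((v⁻¹ : Bˣ) : B)) * (algebraMap ℂ B z - a) = 1 := by
      rw [key_eq, ← hv, hmul', inv_mul_cancel₀ hz0, one_smul, Units.inv_mul]
    exact Ring.inverse_unit ⟨algebraMap ℂ B z - a, w • ((v⁻¹ : Bˣ) : B), h1, h2⟩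
  have hS : HasSum (fun n : ℕ => w ^ n • a ^ n) (Ring.inverse (1 - w • a)) := by
    have := Hball.hasSum hmem
    simpa [ContinuousMultilinearMap.mkPiRing_apply] using this
  refine ⟨hsummable, hunit, ?_⟩
  rw [hinv]
  have := hS.const_smul w
  simpa [smul_smul, pow_succ'] using this

end Series

section CStar
variable {A : Type*} [NonUnitalCStarAlgebra A] [PartialOrder A] [StarOrderedRing A]

variable {A : Type*} [NonUnitalCStarAlgebra A] [PartialOrder A] [StarOrderedRing A]

lemma aux_quasi_norm_le (a : A) {x : ℝ} (hx : x ∈ quasispectrum ℝ a) : ‖x‖ ≤ ‖a‖ := by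
  rw [Unitization.quasispectrum_eq_spectrum_inr' ℝ ℂ a] at hx
  calc ‖x‖ ≤ ‖(a : Unitization ℂ A)‖ := spectrum.norm_le_norm_of_mem hx
    _ = ‖a‖ := Unitization.norm_inr a

lemma aux_norm_posPart_le (a : A) : ‖a⁺‖ ≤ ‖a‖ := by
  rw [CFC.posPart_def]
  refine norm_cfcₙ_le fun x hx => ?_
  refine le_trans ?_ (aux_quasi_norm_le a hx)
  rw [Real.norm_eq_abs, Real.norm_eq_abs, abs_of_nonneg (posPart_nonneg x)]
  rcases le_total x 0 with h|h
  · simpa [posPart_eq_zero.2 h] using abs_nonneg x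
  · simp [posPart_def, abs_nonneg, le_abs_self]

lemma aux_norm_negPart_le (a : A) : ‖a⁻‖ ≤ ‖a‖ := by
  rw [CFC.negPart_def]
  refine norm_cfcₙ_le fun x hx => ?_
  refine le_trans ?_ (aux_quasi_norm_le a hx)
  rw [Real.norm_eq_abs, Real.norm_eq_abs, abs_of_nonneg (negPart_nonneg x)]
  rcases le_total x 0 with h|h
  · simp [negPart_def, abs_nonneg, neg_le_abs]
  · simpa [negPart_eq_zero.2 h] using abs_nonneg x

/-- decomposition of an arbitrary element into four positive parts with norm control -/
lemma aux_decomp (x : A) : ∃ x₁ x₂ x₃ x₄ : A, 0 ≤ x₁ ∧ 0 ≤ x₂ ∧ 0 ≤ x₃ ∧ 0 ≤ x₄ ∧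
    ‖x₁‖ ≤ ‖x‖ ∧ ‖x₂‖ ≤ ‖x‖ ∧ ‖x₃‖ ≤ ‖x‖ ∧ ‖x₄‖ ≤ ‖x‖ ∧
    x = (x₁ - x₂) + Complex.I • (x₃ - x₄) := by
  set a : A := (realPart x : A) with ha
  set b : A := (imaginaryPart x : A) with hb
  have hax : ‖a‖ ≤ ‖x‖ := by
    rw [ha, realPart_apply_coe]
    calc ‖(2⁻¹ : ℝ) • (x + star x)‖ = 2⁻¹ * ‖x + star x‖ := by
          rw [norm_smul]; simp
      _ ≤ 2⁻¹ * (‖x‖ + ‖x‖) := by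
          gcongr
          exact (norm_add_le _ _).trans (by simp)
      _ = ‖x‖ := by ring
  have hbx : ‖b‖ ≤ ‖x‖ := by
    rw [hb, imaginaryPart_apply_coe]
    calc ‖-Complex.I • (2⁻¹ : ℝ) • (x - star x)‖ = 2⁻¹ * ‖x - star x‖ := by
          rw [norm_smul, norm_smul]; simp
      _ ≤ 2⁻¹ * (‖x‖ + ‖x‖) := by
          gcongr
          exact (norm_sub_le _ _).trans (by simp)
      _ = ‖x‖ := by ring
  have hsa : IsSelfAdjoint a := (realPart x).2
  have hsb : IsSelfAdjoint b := (imaginaryPart x).2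
  refine ⟨a⁺, a⁻, b⁺, b⁻, CFC.posPart_nonneg a, CFC.negPart_nonneg a,
    CFC.posPart_nonneg b, CFC.negPart_nonneg b,
    (aux_norm_posPart_le a).trans hax, (aux_norm_negPart_le a).trans hax,
    (aux_norm_posPart_le b).trans hbx, (aux_norm_negPart_le b).trans hbx, ?_⟩
  rw [CFC.posPart_sub_negPart a hsa, CFC.posPart_sub_negPart b hsb]
  exact (realPart_add_I_smul_imaginaryPart x).symm

lemma aux_tsum_nonneg {f : ℕ → A} {y : A} (hy : HasSum f y) (hf : ∀ n, 0 ≤ f n) : 0 ≤ y := by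
  have hclosed : IsClosed {a : A | 0 ≤ a} := CStarAlgebra.isClosed_nonneg
  exact hclosed.mem_of_tendsto hy.tendsto_sum_nat
    (Filter.Eventually.of_forall fun n => Finset.sum_nonneg fun i _ => hf i)


lemma aux_compare (T : A →L[ℂ] A) (hT : ∀ x : A, 0 ≤ x → 0 ≤ T x)
    {l : ℂ} (hl : spectralRadius ℂ T < ‖l‖₊) :
    ‖Ring.inverse (algebraMap ℂ (A →L[ℂ] A) l - T)‖ ≤
      24 * ‖Ring.inverse (algebraMap ℂ (A →L[ℂ] A) ((‖l‖ : ℝ) : ℂ) - T)‖ := by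
  set s : ℝ := ‖l‖ with hs_def
  have hl0 : l ≠ 0 := by
    rintro rfl; simp at hl
  have hs0 : 0 < s := by simpa [hs_def] using hl0
  have hnorm_s : ‖((s : ℝ) : ℂ)‖₊ = ‖l‖₊ := by
    ext; simp [hs_def, abs_of_pos hs0]
  obtain ⟨hsum, hul, hseries_l⟩ := resolvent_series T hl
  obtain ⟨-, hus, hseries_s⟩ := resolvent_series T (hnorm_s ▸ hl)
  set Rl := Ring.inverse (algebraMap ℂ (A →L[ℂ] A) l - T) with hRl
  set Rs := Ring.inverse (algebraMap ℂ (A →L[ℂ] A) ((s : ℝ) : ℂ) - T) with hRs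
  -- step 1 : positive vectors
  have step1 : ∀ x : A, 0 ≤ x → ‖Rl x‖ ≤ 6 * ‖Rs x‖ := by
    intro x hx
    set a : ℕ → A := fun n => (T ^ n) x with ha
    have han : ∀ n, 0 ≤ a n := by
      intro n
      induction n with
      | zero => simpa [ha] using hx
      | succ n ih =>
        have : a (n + 1) = T (a n) := by
          rw [ha]; simp [pow_succ']
        rw [this]; exact hT _ ih
    have hanorm : ∀ n, ‖a n‖ ≤ ‖T ^ n‖ * ‖x‖ := fun n => (T ^ n).le_opNorm x
    have hyl : HasSum (fun n => l⁻¹ ^ (n + 1) • a n) (Rl x) := by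
      have := hseries_l.mapL (ContinuousLinearMap.apply ℂ A x)
      simpa [ha] using this
    have hzs : HasSum (fun n => ((s : ℂ))⁻¹ ^ (n + 1) • a n) (Rs x) := by
      have := hseries_s.mapL (ContinuousLinearMap.apply ℂ A x)
      simpa [ha] using this
    set z := Rs x with hz_def
    have hz0 : 0 ≤ z := by
      refine aux_tsum_nonneg hzs fun n => ?_
      have : ((s : ℂ))⁻¹ ^ (n + 1) • a n = (s⁻¹ ^ (n + 1) : ℝ) • a n := by
        rw [← Complex.coe_smul]; push_cast; ring_nf
      rw [this]
      exact smul_nonneg (by positivity) (han n)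
    -- general real-coefficient bound
    have key : ∀ t : ℕ → ℝ, (∀ n, |t n| ≤ s⁻¹ ^ (n + 1)) →
        ∃ W : A, HasSum (fun n => ((t n : ℝ) : ℂ) • a n) W ∧ ‖W‖ ≤ 3 * ‖z‖ := by
      intro t ht
      have hsummW : Summable (fun n => ((t n : ℝ) : ℂ) • a n) := by
        refine Summable.of_norm_bounded (hsum.mul_left (s⁻¹ * ‖x‖)) fun n => ?_
        rw [norm_smul]
        calc ‖((t n : ℝ) : ℂ)‖ * ‖a n‖ ≤ s⁻¹ ^ (n + 1) * (‖T ^ n‖ * ‖x‖) := by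
              refine mul_le_mul ?_ (hanorm n) (norm_nonneg _) (by positivity)
              simpa [Complex.norm_real] using ht n
          _ = s⁻¹ * ‖x‖ * (‖T ^ n‖ * ‖l‖⁻¹ ^ n) := by
              rw [pow_succ]
              have : ‖l‖ = s := by simp [hs_def]
              rw [this]; ring
      set Wv := ∑' n, ((t n : ℝ) : ℂ) • a n with hWv
      have hWs : HasSum (fun n => ((t n : ℝ) : ℂ) • a n) Wv := hsummW.hasSum
      refine ⟨Wv, hWs, ?_⟩
      have hsub : 0 ≤ z - Wv := by
        refine aux_tsum_nonneg (hzs.sub hWs) fun n => ?_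
        have heq : ((s : ℂ))⁻¹ ^ (n + 1) • a n - ((t n : ℝ) : ℂ) • a n
            = ((s⁻¹ ^ (n + 1) - t n : ℝ)) • a n := by
          rw [show ((s:ℂ))⁻¹ ^ (n+1) = ((s⁻¹ ^ (n+1) : ℝ) : ℂ) by push_cast; ring,
            Complex.coe_smul, Complex.coe_smul, ← sub_smul]
        rw [heq]
        refine smul_nonneg ?_ (han n)
        have := (abs_le.mp (ht n)).2
        linarith
      have hadd : 0 ≤ Wv + z := by
        refine aux_tsum_nonneg (hWs.add hzs) fun n => ?_
        have heq : ((t n : ℝ) : ℂ) • a n + ((s : ℂ))⁻¹ ^ (n + 1) • a n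
            = ((t n + s⁻¹ ^ (n + 1) : ℝ)) • a n := by
          rw [show ((s:ℂ))⁻¹ ^ (n+1) = ((s⁻¹ ^ (n+1) : ℝ) : ℂ) by push_cast; ring,
            Complex.coe_smul, Complex.coe_smul, ← add_smul]
        rw [heq]
        refine smul_nonneg ?_ (han n)
        have := (abs_le.mp (ht n)).1
        linarith
      have hle : Wv + z ≤ z + z := by
        have : Wv ≤ z := sub_nonneg.mp hsub
        exact add_le_add_left this z
      have h1 : ‖Wv + z‖ ≤ ‖z + z‖ := CStarAlgebra.norm_le_norm_of_nonneg_of_le hadd hle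
      calc ‖Wv‖ ≤ ‖Wv + z‖ + ‖z‖ := by
            have := norm_sub_le (Wv + z) z; simpa using this
        _ ≤ ‖z + z‖ + ‖z‖ := by linarith
        _ ≤ 3 * ‖z‖ := by
            have := norm_add_le z z; linarith
    -- split into real and imaginary coefficient parts
    set tRe : ℕ → ℝ := fun n => (l⁻¹ ^ (n + 1)).re with htRe_def
    set tIm : ℕ → ℝ := fun n => (l⁻¹ ^ (n + 1)).im with htIm_def
    have hbound : ∀ n, ‖l⁻¹ ^ (n + 1)‖ = s⁻¹ ^ (n + 1) := by
      intro n
      rw [norm_pow, norm_inv, hs_def]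
    have htRe : ∀ n, |tRe n| ≤ s⁻¹ ^ (n + 1) := fun n =>
      (Complex.abs_re_le_norm _).trans_eq (hbound n)
    have htIm : ∀ n, |tIm n| ≤ s⁻¹ ^ (n + 1) := fun n =>
      (Complex.abs_im_le_norm _).trans_eq (hbound n)
    obtain ⟨WRe, hWRe, hWReN⟩ := key tRe htRe
    obtain ⟨WIm, hWIm, hWImN⟩ := key tIm htIm
    have htot : HasSum (fun n => l⁻¹ ^ (n + 1) • a n) (WRe + Complex.I • WIm) := by
      have hsum2 := hWRe.add (hWIm.const_smul Complex.I)
      refine HasSum.congr_fun hsum2 fun n => ?_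
      have hc : l⁻¹ ^ (n + 1) = (tRe n : ℂ) + (tIm n : ℂ) * Complex.I :=
        (Complex.re_add_im _).symm
      rw [smul_smul, ← add_smul, hc]
      ring_nf
    have hRlx : Rl x = WRe + Complex.I • WIm := hyl.unique htot
    have hIW : ‖Complex.I • WIm‖ = ‖WIm‖ := by
      rw [norm_smul]; simp
    calc ‖Rl x‖ ≤ ‖WRe‖ + ‖Complex.I • WIm‖ := hRlx ▸ norm_add_le _ _
      _ = ‖WRe‖ + ‖WIm‖ := by rw [hIW]
      _ ≤ 3 * ‖z‖ + 3 * ‖z‖ := add_le_add hWReN hWImN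
      _ = 6 * ‖Rs x‖ := by rw [hz_def]; ring
  -- step 2 : operator norm bound
  have hRsn : (0:ℝ) ≤ ‖Rs‖ := norm_nonneg _
  refine ContinuousLinearMap.opNorm_le_bound _ (by positivity) fun x => ?_
  obtain ⟨x₁, x₂, x₃, x₄, p1, p2, p3, p4, n1, n2, n3, n4, hx⟩ := aux_decomp x
  have hRlx : Rl x = (Rl x₁ - Rl x₂) + Complex.I • (Rl x₃ - Rl x₄) := by
    rw [hx]; simp
  have t1 : ‖Rl x‖ ≤ ‖Rl x₁ - Rl x₂‖ + ‖Complex.I • (Rl x₃ - Rl x₄)‖ :=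
    hRlx ▸ norm_add_le _ _
  have t2 : ‖Complex.I • (Rl x₃ - Rl x₄)‖ = ‖Rl x₃ - Rl x₄‖ := by
    rw [norm_smul]; simp
  have t3 : ‖Rl x₁ - Rl x₂‖ ≤ ‖Rl x₁‖ + ‖Rl x₂‖ := norm_sub_le _ _
  have t4 : ‖Rl x₃ - Rl x₄‖ ≤ ‖Rl x₃‖ + ‖Rl x₄‖ := norm_sub_le _ _
  have b1 := step1 x₁ p1
  have b2 := step1 x₂ p2
  have b3 := step1 x₃ p3
  have b4 := step1 x₄ p4
  have c1 : ‖Rs x₁‖ ≤ ‖Rs‖ * ‖x‖ := (Rs.le_opNorm x₁).trans (by gcongr)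
  have c2 : ‖Rs x₂‖ ≤ ‖Rs‖ * ‖x‖ := (Rs.le_opNorm x₂).trans (by gcongr)
  have c3 : ‖Rs x₃‖ ≤ ‖Rs‖ * ‖x‖ := (Rs.le_opNorm x₃).trans (by gcongr)
  have c4 : ‖Rs x₄‖ ≤ ‖Rs‖ * ‖x‖ := (Rs.le_opNorm x₄).trans (by gcongr)
  nlinarith [norm_nonneg x]

end CStar

/-- For a positive bounded operator `T` on a (nonzero) C*-algebra `A`, the spectral radius
`r(T)` belongs to the spectrum of `T`. -/
theorem spectralRadius_mem_spectrum_of_positive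
    {A : Type*} [NonUnitalCStarAlgebra A] [PartialOrder A] [StarOrderedRing A] [Nontrivial A]
    (T : A →L[ℂ] A) (hT : ∀ x : A, 0 ≤ x → 0 ≤ T x) :
    (((spectralRadius ℂ T).toReal : ℝ) : ℂ) ∈ spectrum ℂ T := by
  obtain ⟨μ, hμ, hμr⟩ := spectrum.exists_nnnorm_eq_spectralRadius_of_nonempty
    (spectrum.nonempty T)
  set r := spectralRadius ℂ T with hr_def
  have hrtop : r ≠ ⊤ :=
    ne_top_of_le_ne_top ENNReal.coe_ne_top (spectrum.spectralRadius_le_nnnorm (𝕜 := ℂ) T)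
  set rr := r.toReal with hrr_def
  by_contra hcon
  have hμne : μ ≠ (rr : ℂ) := by rintro rfl; exact hcon hμ
  have habs : ‖μ‖ = rr := by
    have h1 : ‖μ‖₊ = r.toNNReal := by
      have := hμr
      rw [← ENNReal.coe_toNNReal hrtop] at this
      exact_mod_cast this
    have : ‖μ‖ = rr := by
      rw [hrr_def, ← ENNReal.coe_toNNReal hrtop, ← h1]
      simp
    exact this
  have hrr0 : 0 ≤ rr := ENNReal.toReal_nonneg
  have hrrpos : 0 < rr := by
    rcases hrr0.eq_or_lt with h | h
    · exfalso
      apply hμne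
      have : ‖μ‖ = 0 := by rw [habs, ← h]
      have hμ0 : μ = 0 := by simpa using this
      rw [hμ0, ← h]; simp
    · exact h
  -- rr is in the resolvent set
  have hrunit : IsUnit (algebraMap ℂ (A →L[ℂ] A) (rr : ℂ) - T) :=
    spectrum.notMem_iff.mp hcon
  -- continuity of the resolvent at rr
  have hcont : ContinuousAt (fun z : ℂ => Ring.inverse (algebraMap ℂ (A →L[ℂ] A) z - T)) (rr : ℂ) := by
    have h1 : ContinuousAt (fun z : ℂ => algebraMap ℂ (A →L[ℂ] A) z - T) (rr : ℂ) :=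
      ((continuous_algebraMap ℂ (A →L[ℂ] A)).sub continuous_const).continuousAt
    have h2 : ContinuousAt Ring.inverse (algebraMap ℂ (A →L[ℂ] A) (rr : ℂ) - T) := by
      have := NormedRing.inverse_continuousAt hrunit.unit
      rwa [hrunit.unit_spec] at this
    exact ContinuousAt.comp (x := ((rr : ℝ) : ℂ))
      (g := Ring.inverse (M₀ := A →L[ℂ] A)) h2 h1
  set M : ℝ := ‖Ring.inverse (algebraMap ℂ (A →L[ℂ] A) (rr : ℂ) - T)‖ + 1 with hM_def
  have hM0 : 0 < M := by positivity
  have hev : ∀ᶠ z in nhds (rr : ℂ),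
      ‖Ring.inverse (algebraMap ℂ (A →L[ℂ] A) z - T)‖ < M :=
    (hcont.norm.tendsto).eventually_lt_const (by rw [hM_def]; linarith)
  obtain ⟨δ, hδ0, hδ⟩ := Metric.eventually_nhds_iff.mp hev
  -- pick s slightly bigger than rr
  set ε : ℝ := min (δ / 2) (1 / (48 * M)) with hε_def
  have hε0 : 0 < ε := by
    apply lt_min (by linarith) (by positivity)
  set ss : ℝ := rr + ε with hss_def
  have hssrr : rr < ss := by rw [hss_def]; linarith
  have hss0 : 0 < ss := by linarith
  -- the complex point on the circle of radius ss through μ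
  set lam : ℂ := ((ss / rr : ℝ) : ℂ) * μ with hlam_def
  have habs_lam : ‖lam‖ = ss := by
    rw [hlam_def, norm_mul, habs, Complex.norm_real, Real.norm_eq_abs, abs_of_pos (by positivity)]
    field_simp
  -- nnnorm inequalities
  have hr_eq : r = ((Real.toNNReal rr : ℝ≥0) : ℝ≥0∞) := by
    have := ENNReal.ofReal_toReal hrtop
    rw [ENNReal.ofReal] at this
    exact this.symm
  have hllam : r < ‖lam‖₊ := by
    have h1 : ‖lam‖₊ = Real.toNNReal ss := by
      ext
      simp [nnnorm, habs_lam, Real.coe_toNNReal _ hss0.le]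
    rw [hr_eq, h1]
    exact_mod_cast (Real.toNNReal_lt_toNNReal_iff hss0).mpr hssrr
  have hsnorm : ‖((ss : ℝ) : ℂ)‖₊ = ‖lam‖₊ := by
    ext
    simp [habs_lam, abs_of_pos hss0]
  have hs : r < ‖((ss : ℝ) : ℂ)‖₊ := by rw [hsnorm]; exact hllam
  have hul : IsUnit (algebraMap ℂ (A →L[ℂ] A) lam - T) :=
    spectrum.mem_resolventSet_of_spectralRadius_lt hllam
  have hcmp := aux_compare T hT hllam
  rw [habs_lam] at hcmp
  have hRs_lt : ‖Ring.inverse (algebraMap ℂ (A →L[ℂ] A) ((ss : ℝ) : ℂ) - T)‖ < M := by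
    apply hδ
    rw [Complex.dist_eq]
    have h1 : ((ss : ℝ) : ℂ) - ((rr : ℝ) : ℂ) = ((ε : ℝ) : ℂ) := by
      rw [hss_def]; push_cast; ring
    rw [h1, Complex.norm_real, Real.norm_eq_abs, abs_of_pos hε0]
    calc ε ≤ δ / 2 := min_le_left _ _
      _ < δ := by linarith
  set u := hul.unit with hu_def
  have huval : (u : (A →L[ℂ] A)) = algebraMap ℂ (A →L[ℂ] A) lam - T := hul.unit_spec
  have huinv : ((u⁻¹ : _ˣ) : (A →L[ℂ] A))
      = Ring.inverse (algebraMap ℂ (A →L[ℂ] A) lam - T) := by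
    rw [← huval, Ring.inverse_unit]
  have hub : ‖((u⁻¹ : _ˣ) : (A →L[ℂ] A))‖ ≤ 24 * M := by
    rw [huinv]
    refine hcmp.trans ?_
    nlinarith [hRs_lt]
  have hupos : 0 < ‖((u⁻¹ : _ˣ) : (A →L[ℂ] A))‖ := Units.norm_pos _
  have hclose : ‖(algebraMap ℂ (A →L[ℂ] A) μ - T) - (u : (A →L[ℂ] A))‖
      < ‖((u⁻¹ : _ˣ) : (A →L[ℂ] A))‖⁻¹ := by
    rw [huval]
    have h1 : (algebraMap ℂ (A →L[ℂ] A) μ - T) - (algebraMap ℂ (A →L[ℂ] A) lam - T)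
        = algebraMap ℂ (A →L[ℂ] A) (μ - lam) := by
      rw [map_sub, sub_sub_sub_cancel_right]
    rw [h1, norm_algebraMap']
    have h2 : ‖μ - lam‖ = ε := by
      have h3 : μ - lam = ((1 - ss / rr : ℝ) : ℂ) * μ := by
        rw [hlam_def]; push_cast; ring
      rw [h3, norm_mul, Complex.norm_real, Real.norm_eq_abs, habs]
      have h4 : 1 - ss / rr = -(ε / rr) := by
        rw [hss_def]; field_simp; ring
      rw [h4, abs_neg, abs_of_pos (by positivity)]
      field_simp
    rw [show ‖μ - lam‖ = ε from by rw [h2]]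
    calc ε ≤ 1 / (48 * M) := min_le_right _ _
      _ < (24 * M)⁻¹ := by
          rw [one_div]
          apply inv_strictAnti₀ (by positivity) (by nlinarith)
      _ ≤ ‖((u⁻¹ : _ˣ) : (A →L[ℂ] A))‖⁻¹ := by
          exact inv_anti₀ hupos hub
  have hμunit : IsUnit (algebraMap ℂ (A →L[ℂ] A) μ - T) := by
    have h5 := (u.ofNearby _ hclose).isUnit
    simpa using h5
  exact (spectrum.mem_iff.mp hμ) hμunit
end

section
/- Let A be a C*-algebra and let T : A → A be a positive bounded linear operator. Suppose the operator-valued resolvent function λ ↦ (λ·id − T)⁻¹, defined on the resolvent set of T and viewed as a meromorphic function from ℂ into the Banach space of bounded operators on A, has a pole of order k at r(T), and has a pole of order m at some α ∈ σ(T) with |α| = r(T). Then m ≤ k; i.e., the pole order at r(T) is maximal among the pole orders at points of the peripheral spectrum {α ∈ σ(T) : |α| = r(T)}. -/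
open Filter Topology
open scoped NNReal ENNReal

/-- `f` has a pole of order `k` at `z₀`: the function `z ↦ (z - z₀)^k • f z` extends
analytically to `z₀` with a nonzero value there. -/
def IsPoleOfOrder {B : Type*} [NormedAddCommGroup B] [NormedSpace ℂ B]
    (f : ℂ → B) (z₀ : ℂ) (k : ℕ) : Prop :=
  ∃ g : ℂ → B, AnalyticAt ℂ g z₀ ∧ g z₀ ≠ 0 ∧
    ∀ᶠ z in nhdsWithin z₀ {z₀}ᶜ, (z - z₀) ^ k • f z = g z

section PoleLemmas
variable {B : Type*} [NormedAddCommGroup B] [NormedSpace ℂ B]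


/-- Upper bound from a pole: eventually `‖z-z₀‖^k * ‖f z‖ ≤ C`. -/
lemma IsPoleOfOrder.bound {f : ℂ → B} {z₀ : ℂ} {k : ℕ} (h : IsPoleOfOrder f z₀ k) :
    ∃ C : ℝ, 0 < C ∧ ∀ᶠ z in nhdsWithin z₀ {z₀}ᶜ, ‖z - z₀‖ ^ k * ‖f z‖ ≤ C := by
  obtain ⟨g, hg, hg0, heq⟩ := h
  refine ⟨‖g z₀‖ + 1, by positivity, ?_⟩
  have hcont : ContinuousAt g z₀ := hg.continuousAt
  have hb : ∀ᶠ z in nhdsWithin z₀ {z₀}ᶜ, ‖g z‖ ≤ ‖g z₀‖ + 1 := by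
    refine nhdsWithin_le_nhds ?_
    have := hcont.norm.eventually_le_const (by linarith : ‖g z₀‖ < ‖g z₀‖ + 1)
    exact this
  filter_upwards [heq, hb] with z h1 h2
  calc ‖z - z₀‖ ^ k * ‖f z‖ = ‖(z - z₀) ^ k • f z‖ := by
        rw [norm_smul, norm_pow]
    _ = ‖g z‖ := by rw [h1]
    _ ≤ ‖g z₀‖ + 1 := h2

/-- Limit from a pole. -/
lemma IsPoleOfOrder.tendsto {f : ℂ → B} {z₀ : ℂ} {k : ℕ} (h : IsPoleOfOrder f z₀ k) :
    ∃ Q : B, Q ≠ 0 ∧ Tendsto (fun z => (z - z₀) ^ k • f z) (nhdsWithin z₀ {z₀}ᶜ) (𝓝 Q) := by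
  obtain ⟨g, hg, hg0, heq⟩ := h
  refine ⟨g z₀, hg0, ?_⟩
  have : Tendsto g (nhdsWithin z₀ {z₀}ᶜ) (𝓝 (g z₀)) :=
    (hg.continuousAt.tendsto).mono_left nhdsWithin_le_nhds
  exact this.congr' (heq.mono fun z hz => hz.symm)

/-- Same-point pole orders: `m ≤ k` (in fact equal). -/
lemma IsPoleOfOrder.le_of_same {f : ℂ → B} {z₀ : ℂ} {k m : ℕ}
    (hk : IsPoleOfOrder f z₀ k) (hm : IsPoleOfOrder f z₀ m) : m ≤ k := by
  by_contra hlt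
  push_neg at hlt
  obtain ⟨g, hg, hg0, heqg⟩ := hk
  obtain ⟨Q, hQ0, hQ⟩ := hm.tendsto
  have heq : ∀ᶠ z in nhdsWithin z₀ {z₀}ᶜ,
      (z - z₀) ^ m • f z = (z - z₀) ^ (m - k) • g z := by
    filter_upwards [heqg, self_mem_nhdsWithin] with z h1 (h2 : z ∈ ({z₀}ᶜ : Set ℂ))
    have hz : z - z₀ ≠ 0 := sub_ne_zero.mpr h2
    rw [← h1, smul_smul, ← pow_add]
    congr 2
    omega
  have h2 : Tendsto (fun z => (z - z₀) ^ (m - k) • g z) (nhdsWithin z₀ {z₀}ᶜ) (𝓝 0) := by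
    have ht : Tendsto (fun z : ℂ => (z - z₀) ^ (m - k)) (nhdsWithin z₀ {z₀}ᶜ) (𝓝 0) := by
      have : Tendsto (fun z : ℂ => (z - z₀) ^ (m - k)) (𝓝 z₀) (𝓝 ((z₀ - z₀) ^ (m - k))) := by
        exact ((continuous_id.sub continuous_const).pow _).tendsto z₀
      rw [sub_self, zero_pow (by omega)] at this
      exact this.mono_left nhdsWithin_le_nhds
    simpa using ht.smul ((hg.continuousAt.tendsto).mono_left nhdsWithin_le_nhds)
  have := tendsto_nhds_unique (hQ.congr' heq) h2
  exact hQ0 this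

end PoleLemmas

section Series
variable {B : Type*} [NormedRing B] [NormedAlgebra ℂ B] [CompleteSpace B]


lemma eventually_norm_pow_le' {T : B} (hfin : spectralRadius ℂ T ≠ ⊤) {c : ℝ}
    (hc : (spectralRadius ℂ T).toReal < c) : ∀ᶠ n : ℕ in atTop, ‖T ^ n‖ ≤ c ^ n := by
  have hc0 : 0 < c := lt_of_le_of_lt ENNReal.toReal_nonneg hc
  have hlt : spectralRadius ℂ T < ENNReal.ofReal c := by
    rwa [ENNReal.lt_ofReal_iff_toReal_lt hfin]
  have h := spectrum.pow_nnnorm_pow_one_div_tendsto_nhds_spectralRadius T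
  have hev : ∀ᶠ n : ℕ in atTop, (‖T ^ n‖₊ : ℝ≥0∞) ^ (1 / (n : ℝ)) < ENNReal.ofReal c :=
    h.eventually_lt_const hlt
  filter_upwards [hev, eventually_ge_atTop 1] with n hn hn1
  have hne : (n : ℝ) ≠ 0 := by positivity
  have h2 : ((‖T ^ n‖₊ : ℝ≥0∞) ^ (1 / (n : ℝ))) ^ (n : ℝ) ≤ (ENNReal.ofReal c) ^ (n : ℝ) :=
    ENNReal.rpow_le_rpow hn.le (by positivity)
  rw [← ENNReal.rpow_mul, one_div, inv_mul_cancel₀ hne, ENNReal.rpow_one,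
    ENNReal.rpow_natCast, ← ENNReal.ofReal_pow hc0.le] at h2
  have := ENNReal.toReal_mono (by simp) h2
  simpa [ENNReal.toReal_ofReal (by positivity : (0:ℝ) ≤ c ^ n)] using this

lemma summable_norm_pow_div {T : B} (hfin : spectralRadius ℂ T ≠ ⊤) {s : ℝ}
    (hs : (spectralRadius ℂ T).toReal < s) :
    Summable (fun n : ℕ => ‖T ^ n‖ * s⁻¹ ^ (n + 1)) := by
  set r := (spectralRadius ℂ T).toReal with hr
  have hr0 : 0 ≤ r := ENNReal.toReal_nonneg
  set c := (r + s) / 2 with hcdef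
  have hc1 : r < c := by simp [hcdef]; linarith
  have hc2 : c < s := by simp [hcdef]; linarith
  have hc0 : 0 < c := lt_of_le_of_lt hr0 hc1
  have hs0 : 0 < s := lt_trans hc0 hc2
  obtain ⟨N, hN⟩ := (eventually_norm_pow_le' hfin hc1).exists_forall_of_atTop
  rw [← summable_nat_add_iff N]
  have hgeom : Summable (fun n : ℕ => (c ^ (n + N) * s⁻¹ ^ (n + N + 1))) := by
    have h1 : Summable (fun n : ℕ => (c / s) ^ n) :=
      summable_geometric_of_lt_one (by positivity) (by rw [div_lt_one hs0]; exact hc2)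
    refine (h1.mul_left ((c / s) ^ N * s⁻¹)).congr (fun n => ?_)
    field_simp [div_pow, pow_add]
    ring_nf
    rw [mul_inv_cancel_right₀ hs0.ne']
  refine Summable.of_nonneg_of_le (fun n => by positivity) (fun n => ?_) hgeom
  exact mul_le_mul_of_nonneg_right (hN (n + N) (by omega)) (by positivity)

lemma hasSum_resolvent {T : B} (hfin : spectralRadius ℂ T ≠ ⊤) {lam : ℂ}
    (hlam : (spectralRadius ℂ T).toReal < ‖lam‖) :
    HasSum (fun n : ℕ => lam⁻¹ ^ (n + 1) • T ^ n) (resolvent T lam) := by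
  have hs0 : 0 < ‖lam‖ := lt_of_le_of_lt ENNReal.toReal_nonneg hlam
  have hlam0 : lam ≠ 0 := by simpa using hs0.ne'
  have hnorm : ∀ n : ℕ, ‖lam⁻¹ ^ (n + 1) • T ^ n‖ = ‖T ^ n‖ * ‖lam‖⁻¹ ^ (n + 1) := by
    intro n
    rw [norm_smul, norm_pow, norm_inv, mul_comm]
  have hsummable : Summable (fun n : ℕ => lam⁻¹ ^ (n + 1) • T ^ n) := by
    refine Summable.of_norm ?_
    simpa only [hnorm] using summable_norm_pow_div hfin hlam
  -- the terms tend to 0, hence `fun n => lam⁻¹ ^ n • T ^ n` tends to 0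
  have htend : Tendsto (fun n : ℕ => lam⁻¹ ^ n • (T ^ n)) atTop (𝓝 0) := by
    have h1 : Tendsto (fun n : ℕ => lam⁻¹ ^ (n + 1) • T ^ n) atTop (𝓝 0) :=
      hsummable.tendsto_atTop_zero
    have h2 : Tendsto (fun n : ℕ => lam • (lam⁻¹ ^ (n + 1) • T ^ n)) atTop (𝓝 (lam • 0)) :=
      h1.const_smul lam
    rw [smul_zero] at h2
    refine h2.congr fun n => ?_
    rw [smul_smul, pow_succ', ← mul_assoc, mul_inv_cancel₀ hlam0, one_mul]
  set S := ∑' n : ℕ, lam⁻¹ ^ (n + 1) • T ^ n with hS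
  have hSsum : HasSum (fun n : ℕ => lam⁻¹ ^ (n + 1) • T ^ n) S := hsummable.hasSum
  set a := algebraMap ℂ B lam - T with ha
  have ha' : a = lam • (1 : B) - T := by rw [ha, Algebra.algebraMap_eq_smul_one]
  -- telescoping
  have htel : ∀ s : B, HasSum (fun n : ℕ =>
      lam⁻¹ ^ n • T ^ n - lam⁻¹ ^ (n + 1) • T ^ (n + 1)) s → s = 1 := by
    intro s hs
    have h1 := hs.tendsto_sum_nat
    have h2 : Tendsto (fun n : ℕ => (lam⁻¹ ^ 0 • T ^ 0 : B) - lam⁻¹ ^ n • T ^ n) atTop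
        (𝓝 ((lam⁻¹ ^ 0 • T ^ 0 : B) - 0)) := tendsto_const_nhds.sub htend
    have h1' : Tendsto (fun n : ℕ => (lam⁻¹ ^ 0 • T ^ 0 : B) - lam⁻¹ ^ n • T ^ n) atTop (𝓝 s) := by
      refine h1.congr fun n => ?_
      exact Finset.sum_range_sub' (fun i => lam⁻¹ ^ i • T ^ i) n
    have := tendsto_nhds_unique h1' h2
    simpa using this
  have hcancel : ∀ n : ℕ, lam * lam⁻¹ ^ (n + 1) = lam⁻¹ ^ n := by
    intro n
    rw [pow_succ', ← mul_assoc, mul_inv_cancel₀ hlam0, one_mul]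
  have hmul1 : a * S = 1 := by
    refine htel _ ((hSsum.mul_left a).congr fun n => Finset.sum_congr rfl fun i _ => ?_)
    simp only [ha', sub_mul, mul_smul_comm, smul_mul_assoc, one_mul, smul_smul, hcancel,
      ← pow_succ', smul_sub]
    rw [mul_comm, hcancel]
  have hmul2 : S * a = 1 := by
    refine htel _ ((hSsum.mul_right a).congr fun n => Finset.sum_congr rfl fun i _ => ?_)
    simp only [ha', mul_sub, smul_mul_assoc, mul_smul_comm, mul_one, smul_smul,
      mul_comm _ lam, hcancel, ← pow_succ]
  have hres : resolvent T lam = S := by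
    have : Ring.inverse a = S := by
      let u : Bˣ := ⟨a, S, hmul1, hmul2⟩
      exact Ring.inverse_unit u
    simpa [resolvent, ha] using this
  rw [hres]
  exact hSsum

end Series

section Key

variable {A : Type*} [NonUnitalCStarAlgebra A] [PartialOrder A] [StarOrderedRing A]

lemma key_bound (T : A →L[ℂ] A) (hT : ∀ x : A, 0 ≤ x → 0 ≤ T x)
    (hfin : spectralRadius ℂ T ≠ ⊤) {x : A} (hx : 0 ≤ x) {lam : ℂ}
    (hlam : (spectralRadius ℂ T).toReal < ‖lam‖) :
    ‖resolvent T lam x‖ ≤ 6 * ‖resolvent T ((‖lam‖ : ℝ) : ℂ) x‖ := by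
  set s : ℝ := ‖lam‖ with hs
  have hs0 : 0 < s := lt_of_le_of_lt ENNReal.toReal_nonneg hlam
  set μ : ℂ := ((s : ℝ) : ℂ) with hμ
  have hμnorm : ‖μ‖ = s := by
    rw [hμ, Complex.norm_real, Real.norm_of_nonneg hs0.le]
  -- positive terms
  set b : ℕ → A := fun n => (T ^ n) x with hbdef
  have hb : ∀ n, 0 ≤ b n := by
    intro n
    induction n with
    | zero => simpa [hbdef] using hx
    | succ n ih =>
      show 0 ≤ (T ^ (n + 1)) x
      rw [pow_succ', ContinuousLinearMap.mul_apply]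
      exact hT _ ih
  set c : ℕ → ℂ := fun n => lam⁻¹ ^ (n + 1) with hcdef
  set d : ℕ → ℝ := fun n => s⁻¹ ^ (n + 1) with hddef
  have hd0 : ∀ n, 0 ≤ d n := fun n => by positivity
  have hcd : ∀ n, ‖c n‖ = d n := fun n => by
    show ‖lam⁻¹ ^ (n + 1)‖ = s⁻¹ ^ (n + 1)
    rw [norm_pow, norm_inv, ← hs]
  have hbnorm : ∀ n, ‖b n‖ ≤ ‖T ^ n‖ * ‖x‖ := fun n => (T ^ n).le_opNorm x
  have hsummable_norm : Summable (fun n => ‖T ^ n‖ * s⁻¹ ^ (n + 1) * ‖x‖) :=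
    (summable_norm_pow_div hfin hlam).mul_right ‖x‖
  have hdom : ∀ n, ∀ t : ℝ, |t| ≤ d n → ‖t • b n‖ ≤ ‖T ^ n‖ * s⁻¹ ^ (n + 1) * ‖x‖ := by
    intro n t ht
    rw [norm_smul, Real.norm_eq_abs]
    calc |t| * ‖b n‖ ≤ d n * (‖T ^ n‖ * ‖x‖) :=
          mul_le_mul ht (hbnorm n) (norm_nonneg _) (hd0 n)
      _ = ‖T ^ n‖ * s⁻¹ ^ (n + 1) * ‖x‖ := by rw [hddef]; ring
  have hsum_re : Summable (fun n => (c n).re • b n) := by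
    refine Summable.of_norm (Summable.of_nonneg_of_le (fun n => norm_nonneg _)
      (fun n => hdom n _ ?_) hsummable_norm)
    rw [← hcd n]; exact Complex.abs_re_le_norm _
  have hsum_im : Summable (fun n => (c n).im • b n) := by
    refine Summable.of_norm (Summable.of_nonneg_of_le (fun n => norm_nonneg _)
      (fun n => hdom n _ ?_) hsummable_norm)
    rw [← hcd n]; exact Complex.abs_im_le_norm _
  have hsum_d : Summable (fun n => d n • b n) := by
    refine Summable.of_norm (Summable.of_nonneg_of_le (fun n => norm_nonneg _)
      (fun n => hdom n _ ?_) hsummable_norm)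
    rw [abs_of_nonneg (hd0 n)]
  set y₁ : A := ∑' n, (c n).re • b n with hy₁
  set y₂ : A := ∑' n, (c n).im • b n with hy₂
  set z : A := resolvent T μ x with hz
  -- z as a sum
  have hzsum : HasSum (fun n => d n • b n) z := by
    have h0 : HasSum (fun n : ℕ => μ⁻¹ ^ (n + 1) • (T ^ n : A →L[ℂ] A)) (resolvent T μ) :=
      hasSum_resolvent hfin (by rw [hμnorm]; exact hlam)
    have h1 := (ContinuousLinearMap.apply ℂ A x).hasSum h0
    refine HasSum.congr_fun h1 fun n => ?_
    simp only [ContinuousLinearMap.apply_apply, ContinuousLinearMap.smul_apply]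
    rw [show μ⁻¹ ^ (n + 1) = ((d n : ℝ) : ℂ) by
      show ((s : ℂ))⁻¹ ^ (n + 1) = ((s⁻¹ ^ (n + 1) : ℝ) : ℂ); push_cast; ring]
    rw [← Complex.coe_smul]
  -- resolvent at lam applied to x, as a sum
  have hRsum : HasSum (fun n => c n • b n) (resolvent T lam x) := by
    have h0 := hasSum_resolvent hfin hlam
    have h1 := (ContinuousLinearMap.apply ℂ A x).hasSum h0
    exact HasSum.congr_fun h1 fun n => by
      simp only [ContinuousLinearMap.apply_apply, ContinuousLinearMap.smul_apply]
      rfl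
  -- decomposition
  have hdecomp : resolvent T lam x = y₁ + Complex.I • y₂ := by
    have h1 : HasSum (fun n => (c n).re • b n) y₁ := hsum_re.hasSum
    have h2 : HasSum (fun n => Complex.I • ((c n).im • b n)) (Complex.I • y₂) :=
      hsum_im.hasSum.const_smul Complex.I
    have h3 := h1.add h2
    refine hRsum.unique (h3.congr_fun fun n => ?_)
    nth_rw 1 [← Complex.re_add_im (c n)]
    rw [add_smul, ← Complex.coe_smul, ← Complex.coe_smul, mul_comm, mul_smul]
  have hz0 : (0 : A) ≤ z := by
    rw [← hzsum.tsum_eq]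
    exact tsum_nonneg fun n => smul_nonneg (hd0 n) (hb n)
  have hzle : ∀ t : ℕ → ℝ, (∀ n, |t n| ≤ d n) → Summable (fun n => t n • b n) →
      ‖∑' n, t n • b n‖ ≤ 3 * ‖z‖ := by
    intro t ht hsum
    have hle : ∑' n, t n • b n ≤ z := by
      rw [← hzsum.tsum_eq]
      refine Summable.tsum_le_tsum (fun n => ?_) hsum hsum_d
      rw [← sub_nonneg, ← sub_smul]
      exact smul_nonneg (by have := abs_le.mp (ht n); linarith) (hb n)
    have hge : -z ≤ ∑' n, t n • b n := by
      rw [← hzsum.tsum_eq, ← tsum_neg]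
      refine Summable.tsum_le_tsum (fun n => ?_) hsum_d.neg hsum
      rw [← sub_nonneg, sub_neg_eq_add, ← add_smul]
      exact smul_nonneg (by have := abs_le.mp (ht n); linarith) (hb n)
    set y := ∑' n, t n • b n with hydef
    have h0 : (0 : A) ≤ y + z := by
      have := sub_nonneg.mpr hge
      rwa [sub_neg_eq_add] at this
    have h1 : y + z ≤ z + z := add_le_add_left hle z
    have h2 : ‖y + z‖ ≤ ‖z + z‖ := CStarAlgebra.norm_le_norm_of_nonneg_of_le h0 h1
    calc ‖y‖ = ‖(y + z) - z‖ := by rw [add_sub_cancel_right]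
      _ ≤ ‖y + z‖ + ‖z‖ := norm_sub_le _ _
      _ ≤ ‖z + z‖ + ‖z‖ := by linarith
      _ ≤ (‖z‖ + ‖z‖) + ‖z‖ := by linarith [norm_add_le z z]
      _ = 3 * ‖z‖ := by ring
  have hre : ‖y₁‖ ≤ 3 * ‖z‖ := hzle _ (fun n => (hcd n) ▸ Complex.abs_re_le_norm (c n)) hsum_re
  have him : ‖y₂‖ ≤ 3 * ‖z‖ := hzle _ (fun n => (hcd n) ▸ Complex.abs_im_le_norm (c n)) hsum_im
  calc ‖resolvent T lam x‖ = ‖y₁ + Complex.I • y₂‖ := by rw [hdecomp]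
    _ ≤ ‖y₁‖ + ‖Complex.I • y₂‖ := norm_add_le _ _
    _ = ‖y₁‖ + ‖y₂‖ := by rw [norm_smul, Complex.norm_I, one_mul]
    _ ≤ 3 * ‖z‖ + 3 * ‖z‖ := add_le_add hre him
    _ = 6 * ‖z‖ := by ring

end Key

/-- For a positive bounded operator `T` on a C*-algebra, if the resolvent has a pole of
order `k` at `r(T)` and a pole of order `m` at a peripheral spectral point `α`
(`|α| = r(T)`), then `m ≤ k`. -/

theorem pole_order_peripheral_le_pole_order_spectralRadius
    {A : Type*} [NonUnitalCStarAlgebra A] [PartialOrder A] [StarOrderedRing A]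
    (T : A →L[ℂ] A) (hT : ∀ x : A, 0 ≤ x → 0 ≤ T x)
    (k m : ℕ) (hk : 1 ≤ k) (hm : 1 ≤ m)
    (hrpole : IsPoleOfOrder (fun z : ℂ => resolvent T z)
      (((spectralRadius ℂ T).toReal : ℝ) : ℂ) k)
    (α : ℂ) (hα : α ∈ spectrum ℂ T) (hαr : ‖α‖ = (spectralRadius ℂ T).toReal)
    (hαpole : IsPoleOfOrder (fun z : ℂ => resolvent T z) α m) :
    m ≤ k := by
  rcases subsingleton_or_nontrivial A with hsub | hnt
  · haveI : Subsingleton (A →L[ℂ] A) :=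
      ⟨fun f g => ContinuousLinearMap.ext fun x => Subsingleton.elim _ _⟩
    exact absurd hα (by simp [spectrum.mem_iff, isUnit_of_subsingleton])
  set r : ℝ := (spectralRadius ℂ T).toReal with hrdef
  have hfin : spectralRadius ℂ T ≠ ⊤ :=
    ((spectrum.spectralRadius_le_nnnorm (𝕜 := ℂ) T).trans_lt ENNReal.coe_lt_top).ne
  by_cases hsame : α = ((r : ℝ) : ℂ)
  · exact IsPoleOfOrder.le_of_same hrpole (hsame ▸ hαpole)
  have hr0 : 0 ≤ r := ENNReal.toReal_nonneg
  have hα0 : α ≠ 0 := by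
    intro h
    rw [h, norm_zero] at hαr
    exact hsame (by rw [h, ← hαr]; norm_num)
  have hrpos : 0 < r := by
    rcases hr0.eq_or_lt with h | h
    · exact absurd (by rw [← h] at hαr; simpa using hαr) hα0
    · exact h
  by_contra hcon
  push_neg at hcon
  -- choose a positive x not killed by the leading coefficient Q
  obtain ⟨Q, hQ0, hQtend⟩ := hαpole.tendsto
  obtain ⟨x, hx, hQx⟩ : ∃ x : A, 0 ≤ x ∧ Q x ≠ 0 := by
    by_contra hno
    push_neg at hno
    apply hQ0
    ext a
    have hsa : ∀ b : A, IsSelfAdjoint b → Q b = 0 := by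
      intro b hb
      rw [← CFC.posPart_sub_negPart b hb, map_sub, hno _ (CFC.posPart_nonneg b),
        hno _ (CFC.negPart_nonneg b), sub_zero]
    have : Q a = 0 := by
      calc Q a = Q ((realPart a : A) + Complex.I • (imaginaryPart a : A)) := by
            rw [realPart_add_I_smul_imaginaryPart a]
        _ = Q (realPart a : A) + Complex.I • Q (imaginaryPart a : A) := by
            rw [map_add, map_smul]
        _ = 0 := by rw [hsa _ (realPart a).2, hsa _ (imaginaryPart a).2, smul_zero, add_zero]
    simpa using this
  obtain ⟨C, hC0, hCev⟩ := hrpole.bound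
  set l : Filter ℝ := nhdsWithin (1 : ℝ) (Set.Ioi 1) with hldef
  have hlne : l.NeBot := nhdsGT_neBot 1
  -- the two approach maps
  have hmapα : Tendsto (fun t : ℝ => (t : ℂ) * α) l (nhdsWithin α {α}ᶜ) := by
    refine tendsto_nhdsWithin_of_tendsto_nhds_of_eventually_within _ ?_ ?_
    · have h1 : Tendsto (fun t : ℝ => (t : ℂ) * α) (𝓝 1) (𝓝 (((1 : ℝ) : ℂ) * α)) :=
        ((Complex.continuous_ofReal.mul continuous_const).tendsto 1)
      simpa using h1.mono_left nhdsWithin_le_nhds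
    · filter_upwards [self_mem_nhdsWithin] with t ht
      have ht1 : (1 : ℝ) < t := ht
      intro hmem
      have : (t : ℂ) * α = α := hmem
      have h2 : ((t : ℂ) - 1) * α = 0 := by ring_nf; linear_combination this
      rcases mul_eq_zero.mp h2 with h3 | h3
      · have : (t : ℂ) = 1 := by linear_combination h3
        exact absurd (Complex.ofReal_eq_one.mp this) (by linarith)
      · exact hα0 h3
  have hmapr : Tendsto (fun t : ℝ => ((t * r : ℝ) : ℂ)) l
      (nhdsWithin ((r : ℝ) : ℂ) {((r : ℝ) : ℂ)}ᶜ) := by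
    refine tendsto_nhdsWithin_of_tendsto_nhds_of_eventually_within _ ?_ ?_
    · have h1 : Tendsto (fun t : ℝ => ((t * r : ℝ) : ℂ)) (𝓝 1) (𝓝 (((1 * r : ℝ) : ℂ))) := by
        exact (Complex.continuous_ofReal.comp ((continuous_id.mul continuous_const))).tendsto 1
      simpa using h1.mono_left nhdsWithin_le_nhds
    · filter_upwards [self_mem_nhdsWithin] with t ht
      have ht1 : (1 : ℝ) < t := ht
      intro hmem
      have h2 : (t * r : ℝ) = r := by
        have h3 : ((t * r : ℝ) : ℂ) = ((r : ℝ) : ℂ) := hmem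
        exact_mod_cast h3
      nlinarith
  have hE1 : ∀ᶠ t : ℝ in l,
      ‖((t * r : ℝ) : ℂ) - ((r : ℝ) : ℂ)‖ ^ k * ‖resolvent T ((t * r : ℝ) : ℂ)‖ ≤ C :=
    hmapr.eventually hCev
  have hE2 : Tendsto (fun t : ℝ => ((t : ℂ) * α - α) ^ m • resolvent T ((t : ℂ) * α)) l
      (𝓝 Q) := hQtend.comp hmapα
  have hE2x : Tendsto (fun t : ℝ =>
      ‖(((t : ℂ) * α - α) ^ m • resolvent T ((t : ℂ) * α)) x‖) l (𝓝 ‖Q x‖) := by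
    have h1 := ((ContinuousLinearMap.apply ℂ A x).continuous.tendsto Q).comp hE2
    exact (continuous_norm.tendsto (Q x)).comp h1
  set w : ℝ → ℝ := fun t => ((t - 1) * r) ^ m * ‖resolvent T ((t : ℂ) * α) x‖ with hwdef
  have hweq : ∀ᶠ t : ℝ in l,
      ‖(((t : ℂ) * α - α) ^ m • resolvent T ((t : ℂ) * α)) x‖ = w t := by
    filter_upwards [self_mem_nhdsWithin] with t ht
    have ht1 : (1 : ℝ) < t := ht
    rw [hwdef, ContinuousLinearMap.smul_apply, norm_smul, norm_pow]
    congr 2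
    calc ‖(t : ℂ) * α - α‖ = ‖(((t - 1 : ℝ)) : ℂ) * α‖ := by push_cast; ring_nf
      _ = |t - 1| * ‖α‖ := by rw [norm_mul, Complex.norm_real, Real.norm_eq_abs]
      _ = (t - 1) * r := by rw [abs_of_nonneg (by linarith), hαr]
  have hw : Tendsto w l (𝓝 ‖Q x‖) := hE2x.congr' hweq
  -- the upper bound
  have hbound : ∀ᶠ t : ℝ in l, w t ≤ ((t - 1) * r) ^ (m - k) * (6 * ‖x‖ * C) := by
    filter_upwards [hE1, self_mem_nhdsWithin] with t hE1t ht
    have ht1 : (1 : ℝ) < t := ht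
    set q : ℝ := (t - 1) * r with hqdef
    have hq0 : 0 < q := by apply mul_pos <;> linarith
    have hnormtα : ‖(t : ℂ) * α‖ = t * r := by
      rw [norm_mul, Complex.norm_real, Real.norm_eq_abs, abs_of_nonneg (by linarith), hαr]
    have htr : r < ‖(t : ℂ) * α‖ := by rw [hnormtα]; nlinarith
    have hkey := key_bound T hT hfin hx htr
    rw [hnormtα] at hkey
    have hop : ‖resolvent T ((t * r : ℝ) : ℂ) x‖ ≤ ‖resolvent T ((t * r : ℝ) : ℂ)‖ * ‖x‖ :=
      (resolvent T ((t * r : ℝ) : ℂ)).le_opNorm x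
    have hqk : ‖((t * r : ℝ) : ℂ) - ((r : ℝ) : ℂ)‖ = q := by
      rw [hqdef, ← Complex.ofReal_sub, Complex.norm_real, Real.norm_eq_abs,
        abs_of_nonneg (by nlinarith)]
      ring
    rw [hqk] at hE1t
    have hRop : 0 ≤ ‖resolvent T ((t * r : ℝ) : ℂ)‖ := norm_nonneg _
    calc w t = q ^ m * ‖resolvent T ((t : ℂ) * α) x‖ := rfl
      _ ≤ q ^ m * (6 * ‖resolvent T ((t * r : ℝ) : ℂ) x‖) := by
          apply mul_le_mul_of_nonneg_left hkey (by positivity)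
      _ ≤ q ^ m * (6 * (‖resolvent T ((t * r : ℝ) : ℂ)‖ * ‖x‖)) := by
          apply mul_le_mul_of_nonneg_left (by linarith) (by positivity)
      _ = q ^ (m - k) * (6 * ‖x‖) * (q ^ k * ‖resolvent T ((t * r : ℝ) : ℂ)‖) := by
          have hqm : q ^ m = q ^ (m - k) * q ^ k := by
            rw [← pow_add]
            congr 1
            omega
          rw [hqm]; ring
      _ ≤ q ^ (m - k) * (6 * ‖x‖) * C := by
          apply mul_le_mul_of_nonneg_left hE1t (by positivity)
      _ = ((t - 1) * r) ^ (m - k) * (6 * ‖x‖ * C) := by rw [← hqdef]; ring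
  -- the comparison function tends to 0
  have hψ : Tendsto (fun t : ℝ => ((t - 1) * r) ^ (m - k) * (6 * ‖x‖ * C)) l (𝓝 0) := by
    have hc : Continuous fun t : ℝ => ((t - 1) * r) ^ (m - k) * (6 * ‖x‖ * C) :=
      (((continuous_id.sub continuous_const).mul continuous_const).pow _).mul continuous_const
    have h1 := hc.tendsto 1
    have h2 : (((1 : ℝ) - 1) * r) ^ (m - k) * (6 * ‖x‖ * C) = 0 := by
      rw [sub_self, zero_mul, zero_pow (by omega), zero_mul]
    rw [h2] at h1
    exact h1.mono_left nhdsWithin_le_nhds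
  have hfinal : ‖Q x‖ ≤ 0 := le_of_tendsto_of_tendsto hw hψ hbound
  exact absurd (le_antisymm hfinal (norm_nonneg _)) (norm_ne_zero_iff.mpr hQx)
end

section
/- Let A be a C*-algebra and let (a_i)_{i ∈ I} be a monotone increasing net of self-adjoint elements of A (indexed by a directed set I) that converges in the weak topology σ(A, A*) to an element a ∈ A. Then (a_i) converges to a in norm: ‖a_i − a‖ → 0. -/
open Filter Topology


section Auxiliary

open Complex
open scoped CStarAlgebra


section Positivity

variable {E : Type*} [CStarAlgebra E] [PartialOrder E] [StarOrderedRing E] [Nontrivial E]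

/-- A functional of norm at most one sending `1` to `1` has nonnegative real part on
nonnegative elements. -/
lemma re_nonneg_of_norm_le_one {φ : E →L[ℂ] ℂ} (hφ : ‖φ‖ ≤ 1) (h1 : φ 1 = 1)
    {x : E} (hx : 0 ≤ x) : 0 ≤ (φ x).re := by
  rcases eq_or_ne x 0 with rfl | hx0
  · simp
  have hxn : (0:ℝ) < ‖x‖ := norm_pos_iff.mpr hx0
  set y : E := ‖x‖⁻¹ • x with hy
  have hy0 : 0 ≤ y := smul_nonneg (by positivity) hx
  have hyn : ‖y‖ ≤ 1 := by
    rw [hy, norm_smul, norm_inv, norm_norm, inv_mul_cancel₀ hxn.ne']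
  have hy1 : y ≤ 1 := (CStarAlgebra.norm_le_one_iff_of_nonneg y hy0).mp hyn
  have h1y0 : (0:E) ≤ 1 - y := sub_nonneg.mpr hy1
  have h1y1 : (1:E) - y ≤ 1 := by simpa using sub_le_self (1:E) hy0
  have hn : ‖(1:E) - y‖ ≤ 1 := by
    calc ‖(1:E) - y‖ ≤ ‖(1:E)‖ := CStarAlgebra.norm_le_norm_of_nonneg_of_le h1y0 h1y1
    _ = 1 := norm_one
  have habs : ‖1 - φ y‖ ≤ 1 := by
    calc ‖1 - φ y‖ = ‖φ (1 - y)‖ := by rw [map_sub, h1]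
    _ ≤ ‖φ‖ * ‖(1:E) - y‖ := φ.le_opNorm _
    _ ≤ 1 := by nlinarith [norm_nonneg ((1:E) - y), norm_nonneg φ]
  have hre : 0 ≤ (φ y).re := by
    set z := φ y
    have h2 : ‖(1:ℂ) - z‖ ^ 2 ≤ 1 := by nlinarith [norm_nonneg ((1:ℂ) - z)]
    have h3 : ‖(1:ℂ) - z‖ ^ 2 = (1 - z.re)^2 + z.im^2 := by
      rw [Complex.sq_norm, Complex.normSq_apply]
      simp
      ring
    nlinarith [sq_nonneg z.re, sq_nonneg z.im]
  have hxeq : x = ‖x‖ • y := by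
    rw [hy, smul_smul, mul_inv_cancel₀ hxn.ne', one_smul]
  have hxy : φ x = ‖x‖ • φ y := by
    nth_rewrite 1 [hxeq]
    exact φ.map_smul_of_tower _ _
  rw [hxy, Complex.real_smul]
  simpa using mul_nonneg hxn.le hre

end Positivity

section ExistsState

variable {E : Type*} [CStarAlgebra E] [PartialOrder E] [StarOrderedRing E] [Nontrivial E]

lemma exists_state_unital (b : E) (hb : IsSelfAdjoint b) :
    ∃ φ : E →L[ℂ] ℂ, ‖φ‖ ≤ 1 ∧ (∀ x : E, 0 ≤ x → 0 ≤ (φ x).re) ∧ ‖b‖ ≤ |(φ b).re| := by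
  -- the spectral radius of `b` is attained at some `z` in the spectrum
  obtain ⟨z, hz, hzr⟩ := spectrum.exists_nnnorm_eq_spectralRadius (a := b)
  have hznorm : ‖z‖ = ‖b‖ := by
    have := hb.spectralRadius_eq_nnnorm
    rw [this] at hzr
    exact_mod_cast congrArg ENNReal.toReal hzr
  have hzre : z = (z.re : ℂ) := hb.mem_spectrum_eq_re hz
  -- pass to the commutative C⋆-algebra generated by `b`
  haveI := hb.isStarNormal
  set B := StarAlgebra.elemental ℂ b with hB
  haveI : IsClosed (B : Set E) := StarAlgebra.elemental.isClosed ℂ b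
  set bB : B := ⟨b, StarAlgebra.elemental.self_mem ℂ b⟩ with hbB
  have hzB : z ∈ spectrum ℂ bB := by
    rw [StarSubalgebra.spectrum_eq]
    exact hz
  -- find a character attaining `z`
  obtain ⟨f, hf⟩ := WeakDual.CharacterSpace.mem_spectrum_iff_exists.mp hzB
  set ω : B →L[ℂ] ℂ := (WeakDual.CharacterSpace.equivAlgHom f).toContinuousLinearMap with hω
  have hωf : ∀ x : B, ω x = f x := fun x => rfl
  have hωnorm : ∀ x : B, ‖ω x‖ ≤ ‖x‖ := fun x => by
    rw [hωf]
    exact AlgHom.norm_apply_le_self (WeakDual.CharacterSpace.equivAlgHom f) x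
  -- extend to a functional on all of `E` via Hahn–Banach
  set p : Subspace ℂ E := Subalgebra.toSubmodule B.toSubalgebra with hp
  set incl : p →L[ℂ] B :=
    LinearMap.mkContinuous
      { toFun := fun x => (⟨x.1, x.2⟩ : B)
        map_add' := fun x y => rfl
        map_smul' := fun c x => rfl } 1
      (fun x => by rw [one_mul]; exact le_rfl) with hincl
  set ωp : p →L[ℂ] ℂ := ω.comp incl with hωp
  have hωpnorm : ‖ωp‖ ≤ 1 := by
    refine ContinuousLinearMap.opNorm_le_bound _ zero_le_one fun x => ?_
    rw [one_mul]
    exact hωnorm _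
  obtain ⟨g, hg, hgnorm⟩ := exists_extension_norm_eq p ωp
  refine ⟨g, ?_, ?_, ?_⟩
  · rw [hgnorm]; exact hωpnorm
  · have hg1 : g 1 = 1 := by
      have h1p : (1 : E) ∈ p := one_mem B.toSubalgebra
      have := hg ⟨1, h1p⟩
      rw [this]
      show ω (⟨1, h1p⟩ : B) = 1
      rw [hωf]
      exact map_one (WeakDual.CharacterSpace.equivAlgHom f)
    intro x hx
    exact re_nonneg_of_norm_le_one (hgnorm ▸ hωpnorm) hg1 hx
  · have hbp : b ∈ p := StarAlgebra.elemental.self_mem ℂ b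
    have hgb : g b = z := by
      have := hg ⟨b, hbp⟩
      rw [this]
      show ω _ = z
      rw [hωf]
      exact hf
    rw [hgb, ← hznorm]
    conv_lhs => rw [hzre]
    simp
end ExistsState


section NonUnital
variable {A : Type*} [NonUnitalCStarAlgebra A] [PartialOrder A] [StarOrderedRing A]

/-- The inclusion of `A` into its unitization as a continuous linear map. -/
noncomputable def inrCLM : A →L[ℂ] A⁺¹ :=
  LinearMap.mkContinuous
    { toFun := fun x => (x : A⁺¹)
      map_add' := fun x y => by simp
      map_smul' := fun c x => by simp }
    1 (fun x => by simp [Unitization.norm_inr])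

@[simp] lemma inrCLM_apply (x : A) : (inrCLM x : A⁺¹) = (x : A⁺¹) := rfl

lemma exists_state (b : A) (hb : IsSelfAdjoint b) :
    ∃ φ : A →L[ℂ] ℂ, ‖φ‖ ≤ 1 ∧ (∀ x : A, 0 ≤ x → 0 ≤ (φ x).re) ∧ ‖b‖ ≤ |(φ b).re| := by
  have hb' : IsSelfAdjoint (b : A⁺¹) := by
    rw [Unitization.isSelfAdjoint_inr (R := ℂ)]
    exact hb
  obtain ⟨ψ, hψ1, hψ2, hψ3⟩ := exists_state_unital (b : A⁺¹) hb'
  refine ⟨ψ.comp inrCLM, ?_, ?_, ?_⟩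
  · refine ContinuousLinearMap.opNorm_le_bound _ zero_le_one fun x => ?_
    calc ‖ψ (x : A⁺¹)‖ ≤ ‖ψ‖ * ‖(x : A⁺¹)‖ := ψ.le_opNorm _
    _ ≤ 1 * ‖x‖ := by rw [Unitization.norm_inr]; gcongr
  · intro x hx
    exact hψ2 _ (Unitization.inr_nonneg_iff.mpr hx)
  · rw [← Unitization.norm_inr (𝕜 := ℂ) b]
    exact hψ3

/-- The conjugate functional `x ↦ conj (φ (star x))`. -/
noncomputable def conjFunctional (φ : A →L[ℂ] ℂ) : A →L[ℂ] ℂ :=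
  LinearMap.mkContinuous
    { toFun := fun x => starRingEnd ℂ (φ (star x))
      map_add' := fun x y => by simp [star_add, map_add]
      map_smul' := fun c x => by simp [star_smul, smul_eq_mul, mul_comm] }
    ‖φ‖ (fun x => by
      calc ‖starRingEnd ℂ (φ (star x))‖ = ‖φ (star x)‖ := by simp
      _ ≤ ‖φ‖ * ‖star x‖ := φ.le_opNorm _
      _ = ‖φ‖ * ‖x‖ := by rw [norm_star])

@[simp] lemma conjFunctional_apply (φ : A →L[ℂ] ℂ) (x : A) :
    conjFunctional φ x = starRingEnd ℂ (φ (star x)) := rfl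

end NonUnital

end Auxiliary

section Main

open Complex
open scoped CStarAlgebra

/-- A monotone increasing net of self-adjoint elements of a C*-algebra which converges in the
weak topology `σ(A, A*)` converges in norm (to the same limit). -/
theorem tendsto_norm_of_monotone_selfAdjoint_weak_tendsto
    {A : Type*} [NonUnitalCStarAlgebra A] [PartialOrder A] [StarOrderedRing A]
    {I : Type*} [Preorder I] [IsDirected I (· ≤ ·)] [Nonempty I]
    (a : I → A) (hmono : Monotone a) (hsa : ∀ i, IsSelfAdjoint (a i))
    (l : A) (hweak : ∀ φ : A →L[ℂ] ℂ, Tendsto (fun i => φ (a i)) atTop (𝓝 (φ l))) :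
    Tendsto a atTop (𝓝 l) := by
  haveI : NeBot (atTop : Filter I) := atTop_neBot
  -- `l` is self-adjoint
  have hlsa : IsSelfAdjoint l := by
    have key : ∀ φ : A →L[ℂ] ℂ, φ (star l - l) = 0 := by
      intro φ
      have h1 : Tendsto (fun i => (conjFunctional φ) (a i)) atTop
          (𝓝 ((conjFunctional φ) l)) := hweak _
      have h2 : Tendsto (fun i => (conjFunctional φ) (a i)) atTop
          (𝓝 (starRingEnd ℂ (φ l))) := by
        have heq : (fun i => (conjFunctional φ) (a i)) = fun i => star (φ (a i)) := by
          funext i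
          rw [conjFunctional_apply, (hsa i).star_eq, starRingEnd_apply]
        rw [heq]
        exact (hweak φ).star
      have h3 : (conjFunctional φ) l = starRingEnd ℂ (φ l) := tendsto_nhds_unique h1 h2
      rw [conjFunctional_apply] at h3
      have h4 : φ (star l) = φ l := by
        have := congrArg (starRingEnd ℂ) h3
        simpa using this
      rw [map_sub, h4, sub_self]
    have h0 : star l - l = 0 := NormedSpace.eq_zero_of_forall_dual_eq_zero (𝕜 := ℂ) key
    rw [IsSelfAdjoint]
    rw [sub_eq_zero] at h0
    exact h0
  -- the compact set of "positive functionals of norm at most one"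
  set S : Set (WeakDual ℂ A) :=
      {Φ | ‖WeakDual.toStrongDual Φ‖ ≤ 1 ∧ ∀ x : A, 0 ≤ x → 0 ≤ (Φ x).re} with hSdef
  have hScompact : IsCompact S := by
    have hSeq : S = (WeakDual.toStrongDual ⁻¹' Metric.closedBall 0 1)
        ∩ {Φ : WeakDual ℂ A | ∀ x : A, 0 ≤ x → 0 ≤ (Φ x).re} := by
      ext Φ
      simp [hSdef, mem_closedBall_zero_iff]
    rw [hSeq]
    refine (WeakDual.isCompact_closedBall (𝕜 := ℂ) (E := A) 0 1).inter_right ?_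
    have : {Φ : WeakDual ℂ A | ∀ x : A, 0 ≤ x → 0 ≤ (Φ x).re}
        = ⋂ (x : A) (_ : 0 ≤ x), {Φ : WeakDual ℂ A | 0 ≤ (Φ x).re} := by
      ext Φ; simp
    rw [this]
    exact isClosed_iInter fun x => isClosed_iInter fun hx =>
      isClosed_le continuous_const (Complex.continuous_re.comp (WeakDual.eval_continuous x))
  -- pointwise convergence of `(Φ (l - a i)).re` to `0`
  have hpt : ∀ Φ : WeakDual ℂ A, Tendsto (fun i => (Φ (l - a i)).re) atTop (𝓝 0) := by
    intro Φ
    have h1 : Tendsto (fun i => WeakDual.toStrongDual Φ (a i)) atTop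
        (𝓝 (WeakDual.toStrongDual Φ l)) := hweak _
    have h2 : Tendsto (fun i => Φ (l - a i)) atTop (𝓝 0) := by
      have hc : Tendsto (fun _ : I => Φ l) atTop (𝓝 (Φ l)) := tendsto_const_nhds
      have := hc.sub h1
      simpa [map_sub] using this
    have := (Complex.continuous_re.tendsto 0).comp h2
    simpa [Function.comp_def] using this
  -- monotonicity
  have hanti : ∀ Φ ∈ S, ∀ {i j : I}, i ≤ j → (Φ (l - a j)).re ≤ (Φ (l - a i)).re := by
    intro Φ hΦ i j hij
    have h0 : 0 ≤ (Φ (a j - a i)).re := hΦ.2 _ (sub_nonneg.mpr (hmono hij))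
    have heq : (l - a i) - (l - a j) = a j - a i := by abel
    have : (Φ (l - a i)).re - (Φ (l - a j)).re = (Φ (a j - a i)).re := by
      rw [← Complex.sub_re, ← map_sub, heq]
    linarith
  -- nonnegativity
  have hpos : ∀ Φ ∈ S, ∀ i, 0 ≤ (Φ (l - a i)).re := by
    intro Φ hΦ i
    refine le_of_tendsto (hpt Φ) ?_
    filter_upwards [eventually_ge_atTop i] with j hj
    exact hanti Φ hΦ hj
  rw [Metric.tendsto_nhds]
  intro ε hε
  -- Dini's argument
  obtain ⟨i₀, hi₀⟩ : ∃ i₀ : I, ∀ j ≥ i₀, ∀ Φ ∈ S, (Φ (l - a j)).re < ε := by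
    set U : I → Set (WeakDual ℂ A) := fun i => {Φ | (Φ (l - a i)).re < ε} with hU
    have hUopen : ∀ i, IsOpen (U i) := fun i =>
      isOpen_lt (Complex.continuous_re.comp (WeakDual.eval_continuous _)) continuous_const
    have hcover : S ⊆ ⋃ i, U i := by
      intro Φ _
      obtain ⟨i, hi⟩ := ((hpt Φ).eventually (gt_mem_nhds hε)).exists
      exact Set.mem_iUnion.mpr ⟨i, hi⟩
    obtain ⟨t, ht⟩ := hScompact.elim_finite_subcover U hUopen hcover
    obtain ⟨i₀, hi₀⟩ := t.exists_le
    refine ⟨i₀, fun j hj Φ hΦ => ?_⟩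
    obtain ⟨i, hit, hiU⟩ := Set.mem_iUnion₂.mp (ht hΦ)
    calc (Φ (l - a j)).re ≤ (Φ (l - a i)).re := hanti Φ hΦ ((hi₀ i hit).trans hj)
    _ < ε := hiU
  rw [eventually_atTop]
  refine ⟨i₀, fun j hj => ?_⟩
  -- conclude using a norm-attaining positive functional
  obtain ⟨φ, hφ1, hφ2, hφ3⟩ := exists_state (l - a j) (hlsa.sub (hsa j))
  set Φ : WeakDual ℂ A := WeakDual.toStrongDual.symm φ with hΦdef
  have happ : ∀ x : A, Φ x = φ x := fun x => rfl
  have hΦS : Φ ∈ S := by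
    refine ⟨?_, ?_⟩
    · rw [hΦdef, LinearEquiv.apply_symm_apply]
      exact hφ1
    · intro x hx
      rw [happ]
      exact hφ2 x hx
  have h1 : (Φ (l - a j)).re < ε := hi₀ j hj Φ hΦS
  have h2 : 0 ≤ (Φ (l - a j)).re := hpos Φ hΦS j
  rw [dist_eq_norm, norm_sub_rev]
  calc ‖l - a j‖ ≤ |(φ (l - a j)).re| := hφ3
  _ = (Φ (l - a j)).re := by
    rw [happ]
    exact _root_.abs_of_nonneg (happ _ ▸ h2)
  _ < ε := h1

end Main
end

section
/- Let A be a C*-algebra and let (T(t))_{t≥0} be a C₀-semigroup of positive operators on A. Let μ ∈ ℝ and suppose that for every positive x ∈ A there exists an element a_x ∈ A such that the Bochner integrals ∫₀^t e^{−μs} T(s)x ds converge to a_x in the weak topology σ(A, A*) as t → ∞. Then for every λ ∈ ℂ with Re(λ) ≥ μ and every x ∈ A, the improper integral ∫₀^∞ e^{−λs} T(s)x ds converges in norm, i.e., the limit lim_{t→∞} ∫₀^t e^{−λs} T(s)x ds exists in the norm of A. -/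
set_option maxHeartbeats 1000000

open Filter Topology MeasureTheory
open scoped ComplexStarModule


/-- An element that is a weak limit (along `atTop`) of elements of a closed convex set
belongs to that set. -/
lemma aux_weak_mem {E : Type*} [NormedAddCommGroup E] [NormedSpace ℂ E] {S : Set E}
    (hconv : Convex ℝ S) (hcl : IsClosed S) {g : ℝ → E} {a : E}
    (hg : ∀ᶠ t in atTop, g t ∈ S)
    (h : ∀ φ : E →L[ℂ] ℂ, Tendsto (fun t => φ (g t)) atTop (𝓝 (φ a))) : a ∈ S := by
  by_contra hna
  obtain ⟨ψ, u, h1, h2⟩ := geometric_hahn_banach_point_closed hconv hcl hna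
  set φ : E →L[ℂ] ℂ := ψ.extendTo𝕜'
  have hre : ∀ y : E, (φ y).re = ψ y := by
    intro y
    exact StrongDual.re_extendRCLike_apply (𝕜 := ℂ) ψ y
  have hlim : Tendsto (fun t => (φ (g t)).re) atTop (𝓝 ((φ a).re)) :=
    (Complex.continuous_re.tendsto _).comp (h φ)
  have hge : u ≤ (φ a).re := by
    refine ge_of_tendsto hlim ?_
    filter_upwards [hg] with t ht
    rw [hre]
    exact (h2 _ ht).le
  rw [hre] at hge
  exact absurd (lt_of_lt_of_le h1 hge) (lt_irrefl _)

lemma aux_convex_nonneg {A : Type*} [NonUnitalCStarAlgebra A] [PartialOrder A]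
    [StarOrderedRing A] : Convex ℝ {a : A | 0 ≤ a} := fun x hx y hy p q hp hq _ =>
  add_nonneg (smul_nonneg hp hx) (smul_nonneg hq hy)

/-- Interval integral of a pointwise-nonnegative function in a C*-algebra is nonnegative. -/
lemma aux_integral_nonneg {A : Type*} [NonUnitalCStarAlgebra A] [PartialOrder A]
    [StarOrderedRing A] {s t : ℝ} (hst : s ≤ t) {f : ℝ → A}
    (hf : IntervalIntegrable f volume s t) (h : ∀ r ∈ Set.Ioc s t, 0 ≤ f r) :
    0 ≤ ∫ r in s..t, f r := by
  rcases eq_or_lt_of_le hst with rfl | hlt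
  · simp
  rw [intervalIntegral.integral_of_le hst]
  have h0 : volume (Set.Ioc s t) ≠ 0 := by
    simp [Real.volume_Ioc, hlt]
  have hT : volume (Set.Ioc s t) ≠ ⊤ := (measure_Ioc_lt_top).ne
  have hmem : (⨍ r in Set.Ioc s t, f r) ∈ {a : A | 0 ≤ a} := by
    refine Convex.set_average_mem aux_convex_nonneg CStarAlgebra.isClosed_nonneg h0 hT ?_ ?_
    · exact (ae_restrict_iff' measurableSet_Ioc).2 (Filter.Eventually.of_forall h)
    · exact hf.1
  have havg : (⨍ r in Set.Ioc s t, f r) =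
      (volume (Set.Ioc s t)).toReal⁻¹ • ∫ r in Set.Ioc s t, f r := by
    rw [MeasureTheory.average_eq, measureReal_restrict_apply_univ, measureReal_def]
  have hc : (0:ℝ) < (volume (Set.Ioc s t)).toReal := by
    simp [Real.volume_Ioc, ENNReal.toReal_ofReal (by linarith : (0:ℝ) ≤ t - s)]
    linarith
  have : (0:A) ≤ (volume (Set.Ioc s t)).toReal • ⨍ r in Set.Ioc s t, f r :=
    smul_nonneg hc.le hmem
  rwa [havg, smul_inv_smul₀ hc.ne'] at this

/-- A function into a C*-algebra that is eventually monotone and weakly convergent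
converges in norm (Mazur-type argument). -/
lemma aux_norm_tendsto {A : Type*} [NonUnitalCStarAlgebra A] [PartialOrder A]
    [StarOrderedRing A] {F : ℝ → A} {a : A}
    (hmono : ∀ u v : ℝ, 0 ≤ u → u ≤ v → F u ≤ F v)
    (hw : ∀ φ : A →L[ℂ] ℂ, Tendsto (fun t => φ (F t)) atTop (𝓝 (φ a))) :
    Tendsto F atTop (𝓝 a) := by
  have hle : ∀ u : ℝ, 0 ≤ u → F u ≤ a := by
    intro u hu
    have hmem : a - F u ∈ {y : A | 0 ≤ y} := by
      refine aux_weak_mem (S := {y : A | 0 ≤ y}) (g := fun s => F s - F u)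
        aux_convex_nonneg CStarAlgebra.isClosed_nonneg ?_ ?_
      · filter_upwards [eventually_ge_atTop u] with s hs
        exact sub_nonneg.2 (hmono u s hu hs)
      · intro φ
        simpa only [map_sub] using (hw φ).sub tendsto_const_nhds
    exact sub_nonneg.1 hmem
  rw [Metric.tendsto_atTop]
  intro ε hε
  have hamem : a ∈ closure (convexHull ℝ (F '' Set.Ici 0)) := by
    refine aux_weak_mem (S := closure (convexHull ℝ (F '' Set.Ici 0)))
      ((convex_convexHull ℝ _).closure) isClosed_closure ?_ hw
    filter_upwards [eventually_ge_atTop (0:ℝ)] with t ht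
    exact subset_closure (subset_convexHull ℝ _ ⟨t, ht, rfl⟩)
  obtain ⟨c, hcmem, hc⟩ := Metric.mem_closure_iff.1 hamem (ε/2) (by positivity)
  rw [convexHull_eq] at hcmem
  obtain ⟨ι, s, w, z, hw0, hw1, hz, hcc⟩ := hcmem
  have hzz : ∀ i : ι, ∃ r : ℝ, 0 ≤ r ∧ (i ∈ s → z i = F r) := by
    intro i
    by_cases hi : i ∈ s
    · obtain ⟨r, hr, hrz⟩ := hz i hi
      exact ⟨r, hr, fun _ => hrz.symm⟩
    · exact ⟨0, le_rfl, fun h => absurd h hi⟩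
  choose r hr0 hrz using hzz
  set M := ∑ i ∈ s, |r i| with hM
  have hM0 : (0:ℝ) ≤ M := Finset.sum_nonneg fun i _ => abs_nonneg _
  refine ⟨M, fun t htM => ?_⟩
  have ht0 : (0:ℝ) ≤ t := le_trans hM0 htM
  have hcle : c ≤ F t := by
    have key : F t - c = ∑ i ∈ s, w i • (F t - z i) := by
      rw [← hcc, Finset.centerMass_eq_of_sum_1 _ _ hw1]
      calc F t - ∑ i ∈ s, w i • z i
          = (∑ i ∈ s, w i) • F t - ∑ i ∈ s, w i • z i := by rw [hw1, one_smul]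
        _ = ∑ i ∈ s, (w i • F t - w i • z i) := by
            rw [Finset.sum_smul, Finset.sum_sub_distrib]
        _ = ∑ i ∈ s, w i • (F t - z i) := by simp [smul_sub]
    rw [← sub_nonneg, key]
    refine Finset.sum_nonneg fun i hi => smul_nonneg (hw0 i hi) ?_
    rw [sub_nonneg, hrz i hi]
    refine hmono (r i) t (hr0 i) (le_trans ?_ htM)
    exact le_trans (le_abs_self _) (Finset.single_le_sum (fun j _ => abs_nonneg (r j)) hi)
  have h1 : (0:A) ≤ a - F t := sub_nonneg.2 (hle t ht0)
  have h2 : a - F t ≤ a - c := sub_le_sub_left hcle a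
  have h3 : ‖a - F t‖ ≤ ‖a - c‖ := CStarAlgebra.norm_le_norm_of_nonneg_of_le h1 h2
  calc dist (F t) a = ‖a - F t‖ := by rw [dist_eq_norm, ← norm_neg]; congr 1; abel
    _ ≤ ‖a - c‖ := h3
    _ = dist a c := (dist_eq_norm a c).symm
    _ < ε := lt_of_lt_of_le hc (by linarith)

/-- Let `(T(t))_{t ≥ 0}` be a `C₀`-semigroup of positive operators on a C*-algebra `A` and
`μ ∈ ℝ`. If for every positive `x` the integrals `∫₀ᵗ e^{-μs} T(s)x ds` converge weakly as
`t → ∞`, then for every `λ` with `Re λ ≥ μ` and every `x ∈ A` the integrals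
`∫₀ᵗ e^{-λs} T(s)x ds` converge in norm as `t → ∞`. -/
theorem norm_convergence_of_weak_convergence_of_positive_semigroup
    {A : Type*} [NonUnitalCStarAlgebra A] [PartialOrder A] [StarOrderedRing A]
    (T : ℝ → A →L[ℂ] A)
    (hT0 : T 0 = 1)
    (hTadd : ∀ s t : ℝ, 0 ≤ s → 0 ≤ t → T (s + t) = T s ∘L T t)
    (hTcont : ∀ x : A, ContinuousOn (fun t => T t x) (Set.Ici 0))
    (hTpos : ∀ t : ℝ, 0 ≤ t → ∀ x : A, 0 ≤ x → 0 ≤ T t x)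
    (μ : ℝ)
    (hweak : ∀ x : A, 0 ≤ x → ∃ a : A, ∀ φ : A →L[ℂ] ℂ,
      Tendsto (fun t : ℝ => φ (∫ s in (0:ℝ)..t, Real.exp (-(μ * s)) • T s x))
        atTop (𝓝 (φ a))) :
    ∀ lam : ℂ, μ ≤ lam.re → ∀ x : A, ∃ b : A,
      Tendsto (fun t : ℝ => ∫ s in (0:ℝ)..t, Complex.exp (-(lam * s)) • T s x)
        atTop (𝓝 b) := by
  intro lam hlam x
  -- real-coefficient integrability
  have hint : ∀ (c : ℝ → ℝ), Continuous c → ∀ (y : A) (u v : ℝ), 0 ≤ u → 0 ≤ v →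
      IntervalIntegrable (fun r => c r • T r y) volume u v := by
    intro c hc y u v hu hv
    apply ContinuousOn.intervalIntegrable
    exact hc.continuousOn.smul ((hTcont y).mono fun r hr => le_trans (le_min hu hv) hr.1)
  -- complex-coefficient integrability
  have hintC : ∀ (c : ℝ → ℂ), Continuous c → ∀ (y : A) (u v : ℝ), 0 ≤ u → 0 ≤ v →
      IntervalIntegrable (fun r => c r • T r y) volume u v := by
    intro c hc y u v hu hv
    apply ContinuousOn.intervalIntegrable
    exact hc.continuousOn.smul ((hTcont y).mono fun r hr => le_trans (le_min hu hv) hr.1)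
  have hexp : Continuous fun r : ℝ => Real.exp (-(μ * r)) := by fun_prop
  have hexpC : Continuous fun r : ℝ => Complex.exp (-(lam * r)) := by fun_prop
  -- the key claim for nonnegative elements
  have key : ∀ x₀ : A, 0 ≤ x₀ → ∃ b : A,
      Tendsto (fun t : ℝ => ∫ s in (0:ℝ)..t, Complex.exp (-(lam * s)) • T s x₀)
        atTop (𝓝 b) := by
    intro x₀ hx₀
    obtain ⟨a, ha⟩ := hweak x₀ hx₀
    set F : ℝ → A := fun t => ∫ s in (0:ℝ)..t, Real.exp (-(μ * s)) • T s x₀ with hFdef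
    set G : ℝ → A := fun t => ∫ s in (0:ℝ)..t, Complex.exp (-(lam * s)) • T s x₀ with hGdef
    have hFdiff : ∀ u v : ℝ, 0 ≤ u → 0 ≤ v →
        F v - F u = ∫ r in u..v, Real.exp (-(μ * r)) • T r x₀ := by
      intro u v hu hv
      have h := intervalIntegral.integral_add_adjacent_intervals
        (hint _ hexp x₀ 0 u le_rfl hu) (hint _ hexp x₀ u v hu hv)
      simp only [hFdef]
      rw [← h, add_sub_cancel_left]
    have hGdiff : ∀ u v : ℝ, 0 ≤ u → 0 ≤ v →
        G v - G u = ∫ r in u..v, Complex.exp (-(lam * r)) • T r x₀ := by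
      intro u v hu hv
      have h := intervalIntegral.integral_add_adjacent_intervals
        (hintC _ hexpC x₀ 0 u le_rfl hu) (hintC _ hexpC x₀ u v hu hv)
      simp only [hGdef]
      rw [← h, add_sub_cancel_left]
    have hmono : ∀ u v : ℝ, 0 ≤ u → u ≤ v → F u ≤ F v := by
      intro u v hu huv
      have hv : 0 ≤ v := hu.trans huv
      rw [← sub_nonneg, hFdiff u v hu hv]
      exact aux_integral_nonneg huv (hint _ hexp x₀ u v hu hv) fun r hr =>
        smul_nonneg (Real.exp_nonneg _) (hTpos r (hu.trans hr.1.le) x₀ hx₀)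
    have hFa : Tendsto F atTop (𝓝 a) := aux_norm_tendsto hmono ha
    -- the Cauchy-type bound
    have hGB : ∀ u v : ℝ, 0 ≤ u → u ≤ v → ‖G v - G u‖ ≤ 4 * ‖F v - F u‖ := by
      intro u v hu huv
      have hv : 0 ≤ v := hu.trans huv
      -- the generic bound for a real coefficient in [0,1]
      have key2 : ∀ g : ℝ → ℝ, Continuous g → (∀ r, 0 ≤ g r) → (∀ r, 0 ≤ r → g r ≤ 1) →
          ‖∫ r in u..v, (g r * Real.exp (-(μ * r))) • T r x₀‖ ≤ ‖F v - F u‖ := by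
        intro g hgc hg0 hg1
        have hgec : Continuous fun r => g r * Real.exp (-(μ * r)) := by fun_prop
        have hJint := hint _ hgec x₀ u v hu hv
        have hFint := hint _ hexp x₀ u v hu hv
        have h0J : (0:A) ≤ ∫ r in u..v, (g r * Real.exp (-(μ * r))) • T r x₀ :=
          aux_integral_nonneg huv hJint fun r hr =>
            smul_nonneg (mul_nonneg (hg0 r) (Real.exp_nonneg _))
              (hTpos r (hu.trans hr.1.le) x₀ hx₀)
        have hJle : (∫ r in u..v, (g r * Real.exp (-(μ * r))) • T r x₀) ≤ F v - F u := by
          rw [hFdiff u v hu hv, ← sub_nonneg, ← intervalIntegral.integral_sub hFint hJint]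
          refine aux_integral_nonneg huv (hFint.sub hJint) fun r hr => ?_
          have hr0 : (0:ℝ) ≤ r := hu.trans hr.1.le
          have heq : Real.exp (-(μ * r)) • T r x₀ - (g r * Real.exp (-(μ * r))) • T r x₀
              = ((1 - g r) * Real.exp (-(μ * r))) • T r x₀ := by
            rw [← sub_smul]; congr 1; ring
          rw [heq]
          exact smul_nonneg (mul_nonneg (by linarith [hg1 r hr0]) (Real.exp_nonneg _))
            (hTpos r hr0 x₀ hx₀)
        exact CStarAlgebra.norm_le_norm_of_nonneg_of_le h0J hJle
      -- decomposition of the complex coefficient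
      set hc : ℝ → ℂ := fun r => Complex.exp (-(lam * r)) * Real.exp (μ * r) with hcdef
      have hccont : Continuous hc := by fun_prop
      have habs : ∀ r : ℝ, 0 ≤ r → ‖hc r‖ ≤ 1 := by
        intro r hr
        rw [hcdef]
        simp only [norm_mul, Complex.norm_exp, Complex.norm_real, Real.norm_eq_abs,
          abs_of_nonneg (Real.exp_nonneg _), ← Real.exp_add]
        calc Real.exp ((-(lam * r)).re + μ * r) ≤ Real.exp 0 := by
              apply Real.exp_le_exp.2
              have : (-(lam * (r:ℂ))).re = -(lam.re * r) := by
                simp [Complex.mul_re]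
              rw [this]
              nlinarith [mul_le_mul_of_nonneg_right hlam hr]
          _ = 1 := Real.exp_zero
      set g1 : ℝ → ℝ := fun r => max (hc r).re 0 with hg1def
      set g2 : ℝ → ℝ := fun r => max (-(hc r).re) 0 with hg2def
      set g3 : ℝ → ℝ := fun r => max (hc r).im 0 with hg3def
      set g4 : ℝ → ℝ := fun r => max (-(hc r).im) 0 with hg4def
      have hb1 : ∀ r : ℝ, 0 ≤ r → g1 r ≤ 1 := fun r hr => max_le
        ((le_abs_self _).trans ((Complex.abs_re_le_norm _).trans (habs r hr))) zero_le_one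
      have hb2 : ∀ r : ℝ, 0 ≤ r → g2 r ≤ 1 := fun r hr => max_le
        ((neg_le_abs _).trans ((Complex.abs_re_le_norm _).trans (habs r hr))) zero_le_one
      have hb3 : ∀ r : ℝ, 0 ≤ r → g3 r ≤ 1 := fun r hr => max_le
        ((le_abs_self _).trans ((Complex.abs_im_le_norm _).trans (habs r hr))) zero_le_one
      have hb4 : ∀ r : ℝ, 0 ≤ r → g4 r ≤ 1 := fun r hr => max_le
        ((neg_le_abs _).trans ((Complex.abs_im_le_norm _).trans (habs r hr))) zero_le_one
      -- pointwise splitting of the integrand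
      have hsplit : ∀ r : ℝ, Complex.exp (-(lam * r)) • T r x₀ =
          ((g1 r * Real.exp (-(μ * r))) • T r x₀ - (g2 r * Real.exp (-(μ * r))) • T r x₀)
          + (Complex.I • ((g3 r * Real.exp (-(μ * r))) • T r x₀)
             - Complex.I • ((g4 r * Real.exp (-(μ * r))) • T r x₀)) := by
        intro r
        have h1 : g1 r - g2 r = (hc r).re := max_zero_sub_max_neg_zero_eq_self _
        have h2 : g3 r - g4 r = (hc r).im := max_zero_sub_max_neg_zero_eq_self _
        have hcoef : hc r * (Real.exp (-(μ * r)) : ℂ) = Complex.exp (-(lam * r)) := by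
          rw [hcdef]
          rw [mul_assoc, ← Complex.ofReal_mul, ← Real.exp_add, add_neg_cancel,
            Real.exp_zero, Complex.ofReal_one, mul_one]
        have hre : ((g1 r - g2 r : ℝ) : ℂ) + ((g3 r - g4 r : ℝ) : ℂ) * Complex.I = hc r := by
          rw [h1, h2, Complex.re_add_im]
        rw [← Complex.coe_smul, ← Complex.coe_smul, ← Complex.coe_smul, ← Complex.coe_smul,
          smul_smul, smul_smul, ← sub_smul, ← sub_smul, ← add_smul]
        congr 1
        rw [← hcoef, ← hre]
        push_cast
        ring
      -- integrabilities of the pieces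
      have hI1 := hint _ (by fun_prop : Continuous fun r => g1 r * Real.exp (-(μ * r))) x₀ u v hu hv
      have hI2 := hint _ (by fun_prop : Continuous fun r => g2 r * Real.exp (-(μ * r))) x₀ u v hu hv
      have hI3 := hint _ (by fun_prop : Continuous fun r => g3 r * Real.exp (-(μ * r))) x₀ u v hu hv
      have hI4 := hint _ (by fun_prop : Continuous fun r => g4 r * Real.exp (-(μ * r))) x₀ u v hu hv
      have hI3' : IntervalIntegrable (fun r => Complex.I • ((g3 r * Real.exp (-(μ * r))) • T r x₀))
          volume u v := hI3.smul Complex.I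
      have hI4' : IntervalIntegrable (fun r => Complex.I • ((g4 r * Real.exp (-(μ * r))) • T r x₀))
          volume u v := hI4.smul Complex.I
      have hEq : G v - G u =
          ((∫ r in u..v, (g1 r * Real.exp (-(μ * r))) • T r x₀)
            - ∫ r in u..v, (g2 r * Real.exp (-(μ * r))) • T r x₀)
          + (Complex.I • (∫ r in u..v, (g3 r * Real.exp (-(μ * r))) • T r x₀)
            - Complex.I • (∫ r in u..v, (g4 r * Real.exp (-(μ * r))) • T r x₀)) := by
        rw [hGdiff u v hu hv]
        rw [intervalIntegral.integral_congr (g := fun r =>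
          ((g1 r * Real.exp (-(μ * r))) • T r x₀ - (g2 r * Real.exp (-(μ * r))) • T r x₀)
          + (Complex.I • ((g3 r * Real.exp (-(μ * r))) • T r x₀)
             - Complex.I • ((g4 r * Real.exp (-(μ * r))) • T r x₀))) (fun r _ => hsplit r)]
        rw [intervalIntegral.integral_add ((hI1.sub hI2)) (hI3'.sub hI4'),
          intervalIntegral.integral_sub hI1 hI2,
          intervalIntegral.integral_sub hI3' hI4',
          intervalIntegral.integral_smul, intervalIntegral.integral_smul]
      rw [hEq]
      have hn1 := key2 g1 (by fun_prop) (fun r => le_max_right _ _) hb1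
      have hn2 := key2 g2 (by fun_prop) (fun r => le_max_right _ _) hb2
      have hn3 := key2 g3 (by fun_prop) (fun r => le_max_right _ _) hb3
      have hn4 := key2 g4 (by fun_prop) (fun r => le_max_right _ _) hb4
      have hI : ∀ y : A, ‖Complex.I • y‖ = ‖y‖ := by
        intro y; rw [norm_smul, Complex.norm_I, one_mul]
      refine le_trans (norm_add_le _ _) ?_
      refine le_trans (add_le_add (norm_sub_le _ _) (norm_sub_le _ _)) ?_
      rw [hI, hI]
      linarith
    -- conclude: G is Cauchy, hence converges
    have hGc : CauchySeq G := by
      rw [Metric.cauchySeq_iff]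
      intro ε hε
      obtain ⟨N, hN⟩ := Metric.cauchySeq_iff.1 hFa.cauchySeq (ε/5) (by positivity)
      have hsym : ∀ m n : ℝ, max N 0 ≤ m → max N 0 ≤ n → n ≤ m → dist (G m) (G n) < ε := by
        intro m n hm hn hnm
        have hn0 : (0:ℝ) ≤ n := le_trans (le_max_right N 0) hn
        have hNm : N ≤ m := le_trans (le_max_left N 0) hm
        have hNn : N ≤ n := le_trans (le_max_left N 0) hn
        rw [dist_eq_norm]
        calc ‖G m - G n‖ ≤ 4 * ‖F m - F n‖ := hGB n m hn0 hnm
          _ = 4 * dist (F m) (F n) := by rw [dist_eq_norm]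
          _ < 4 * (ε/5) := by
              have := hN m hNm n hNn
              linarith
          _ < ε := by linarith
      refine ⟨max N 0, fun m hm n hn => ?_⟩
      rcases le_total n m with h | h
      · exact hsym m n hm hn h
      · rw [dist_comm]; exact hsym n m hn hm h
    exact cauchySeq_tendsto_of_complete hGc
  -- general `x` via the decomposition into four nonnegative elements
  obtain ⟨b1, h1⟩ := key ((ℜ x : A)⁺) (CFC.posPart_nonneg _)
  obtain ⟨b2, h2⟩ := key ((ℜ x : A)⁻) (CFC.negPart_nonneg _)
  obtain ⟨b3, h3⟩ := key ((ℑ x : A)⁺) (CFC.posPart_nonneg _)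
  obtain ⟨b4, h4⟩ := key ((ℑ x : A)⁻) (CFC.negPart_nonneg _)
  refine ⟨b1 - b2 + (Complex.I • b3 - Complex.I • b4), ?_⟩
  have hdecomp : ((ℜ x : A)⁺ - (ℜ x : A)⁻) + (Complex.I • (ℑ x : A)⁺ - Complex.I • (ℑ x : A)⁻)
      = x := CStarAlgebra.linear_combination_nonneg x
  have hlin : ∀ᶠ t : ℝ in atTop, (∫ s in (0:ℝ)..t, Complex.exp (-(lam * s)) • T s x)
      = ((∫ s in (0:ℝ)..t, Complex.exp (-(lam * s)) • T s ((ℜ x : A)⁺))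
          - ∫ s in (0:ℝ)..t, Complex.exp (-(lam * s)) • T s ((ℜ x : A)⁻))
        + (Complex.I • (∫ s in (0:ℝ)..t, Complex.exp (-(lam * s)) • T s ((ℑ x : A)⁺))
          - Complex.I • (∫ s in (0:ℝ)..t, Complex.exp (-(lam * s)) • T s ((ℑ x : A)⁻))) := by
    filter_upwards [eventually_ge_atTop (0:ℝ)] with t ht
    have e1 := hintC _ hexpC ((ℜ x : A)⁺) 0 t le_rfl ht
    have e2 := hintC _ hexpC ((ℜ x : A)⁻) 0 t le_rfl ht
    have e3 := hintC _ hexpC ((ℑ x : A)⁺) 0 t le_rfl ht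
    have e4 := hintC _ hexpC ((ℑ x : A)⁻) 0 t le_rfl ht
    have e3' : IntervalIntegrable
        (fun s => Complex.I • (Complex.exp (-(lam * s)) • T s ((ℑ x : A)⁺))) volume 0 t :=
      e3.smul Complex.I
    have e4' : IntervalIntegrable
        (fun s => Complex.I • (Complex.exp (-(lam * s)) • T s ((ℑ x : A)⁻))) volume 0 t :=
      e4.smul Complex.I
    rw [← intervalIntegral.integral_smul, ← intervalIntegral.integral_smul,
      ← intervalIntegral.integral_sub e1 e2, ← intervalIntegral.integral_sub e3' e4',
      ← intervalIntegral.integral_add (e1.sub e2) (e3'.sub e4')]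
    refine intervalIntegral.integral_congr fun s hs => ?_
    conv_lhs => rw [← hdecomp]
    rw [map_add, map_sub, map_sub, ContinuousLinearMap.map_smul, ContinuousLinearMap.map_smul]
    module
  refine Tendsto.congr' (hlin.mono fun t ht => ht.symm) ?_
  exact ((h1.sub h2).add ((h3.const_smul Complex.I).sub (h4.const_smul Complex.I)))
end

section
/- Let A be a C*-algebra and let T : A → A be a positive bounded linear operator with spectral radius r := r(T) > 0. Let α ∈ ℂ with |α| = r, let μ > r, and set λ := (μ/r)·α, so |λ| = μ and |λ − α| = μ − r. Then for every m ∈ ℕ, every positive continuous linear functional φ on A with ‖φ‖ ≤ 1, and every positive x ∈ A with ‖x‖ ≤ 1, one has |λ − α|^m · |φ((λ·id − T)⁻¹ x)| ≤ (μ − r)^m · ‖(μ·id − T)⁻¹‖. -/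
open scoped ComplexOrder ENNReal NNReal
open Filter Topology

private lemma norm_pow_eventually_le_aux {A : Type*} [NonUnitalCStarAlgebra A]
    (T : A →L[ℂ] A) {c : ℝ} (hc : spectralRadius ℂ T < ENNReal.ofReal c) :
    ∀ᶠ n : ℕ in atTop, ‖T ^ n‖ ≤ c ^ n := by
  have h := spectrum.limsup_pow_nnnorm_pow_one_div_le_spectralRadius (A := A →L[ℂ] A) T
  have h2 : ∀ᶠ n : ℕ in atTop, (‖T ^ n‖₊ : ℝ≥0∞) ^ (1 / n : ℝ) < ENNReal.ofReal c :=
    Filter.eventually_lt_of_limsup_lt (lt_of_le_of_lt h hc)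
  have hc0 : 0 < c := by
    by_contra h0
    push_neg at h0
    rw [ENNReal.ofReal_of_nonpos h0] at hc
    exact absurd hc (by simp)
  filter_upwards [h2, Filter.eventually_ge_atTop 1] with n hn hn1
  have hn0 : (n : ℝ) ≠ 0 := by positivity
  have key : (‖T ^ n‖₊ : ℝ≥0∞) ≤ ENNReal.ofReal c ^ (n : ℝ) := by
    have h3 := ENNReal.rpow_le_rpow hn.le (Nat.cast_nonneg (α := ℝ) n)
    rwa [← ENNReal.rpow_mul, one_div, inv_mul_cancel₀ hn0, ENNReal.rpow_one] at h3
  rw [ENNReal.ofReal_rpow_of_pos hc0, Real.rpow_natCast, ← enorm_eq_nnnorm, ← ofReal_norm,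
    ENNReal.ofReal_le_ofReal_iff (by positivity)] at key
  exact key

private lemma hasSum_resolvent_aux {A : Type*} [NonUnitalCStarAlgebra A]
    (T : A →L[ℂ] A) {z : ℂ} (hz : spectralRadius ℂ T < ENNReal.ofReal ‖z‖) :
    HasSum (fun n : ℕ => (z⁻¹) ^ (n + 1) • T ^ n) (resolvent T z) := by
  have hzpos : 0 < ‖z‖ := by
    by_contra h0
    push_neg at h0
    rw [ENNReal.ofReal_of_nonpos h0] at hz
    exact absurd hz (by simp)
  have hz0 : z ≠ 0 := by simpa using hzpos.ne'
  have hnetop : spectralRadius ℂ T ≠ ⊤ := hz.ne_top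
  obtain ⟨c, hc0, hcz, hsc⟩ :
      ∃ c : ℝ, 0 < c ∧ c < ‖z‖ ∧ spectralRadius ℂ T < ENNReal.ofReal c := by
    have hslt : (spectralRadius ℂ T).toReal < ‖z‖ := ENNReal.toReal_lt_of_lt_ofReal hz
    have hs0 : 0 ≤ (spectralRadius ℂ T).toReal := ENNReal.toReal_nonneg
    refine ⟨((spectralRadius ℂ T).toReal + ‖z‖) / 2, by positivity, by linarith, ?_⟩
    exact (ENNReal.lt_ofReal_iff_toReal_lt hnetop).mpr (by linarith)
  have hratio : c * ‖z‖⁻¹ < 1 := by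
    rw [← div_eq_mul_inv, div_lt_one hzpos]; exact hcz
  have hsumg : Summable (fun n : ℕ => ‖z‖⁻¹ * (c * ‖z‖⁻¹) ^ n) :=
    (summable_geometric_of_lt_one (by positivity) hratio).mul_left _
  have hsum : Summable (fun n : ℕ => (z⁻¹) ^ (n + 1) • T ^ n) := by
    apply Summable.of_norm_bounded_eventually hsumg
    rw [Nat.cofinite_eq_atTop]
    filter_upwards [norm_pow_eventually_le_aux T hsc] with n hn
    have hns := norm_smul ((z⁻¹) ^ (n + 1)) (T ^ n)
    rw [hns, norm_pow, norm_inv]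
    calc ‖z‖⁻¹ ^ (n + 1) * ‖T ^ n‖ ≤ ‖z‖⁻¹ ^ (n + 1) * c ^ n :=
          mul_le_mul_of_nonneg_left hn (by positivity)
      _ = ‖z‖⁻¹ * (c * ‖z‖⁻¹) ^ n := by ring
  have hf0 : Tendsto (fun n : ℕ => (z⁻¹) ^ (n + 1) • T ^ n) atTop (𝓝 0) :=
    hsum.tendsto_atTop_zero
  obtain ⟨S, hS⟩ := hsum
  have hzz : ∀ n : ℕ, z * z⁻¹ ^ (n + 1) = z⁻¹ ^ n := by
    intro n
    rw [pow_succ', ← mul_assoc, mul_inv_cancel₀ hz0, one_mul]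
  have hgf : ∀ n : ℕ, (z⁻¹) ^ n • T ^ n = z • ((z⁻¹) ^ (n + 1) • T ^ n) := by
    intro n
    rw [smul_smul, hzz]
  have hgtendsto : Tendsto (fun n : ℕ => (z⁻¹) ^ n • T ^ n) atTop (𝓝 0) := by
    have := hf0.const_smul z
    rw [smul_zero] at this
    exact Tendsto.congr (fun n => (hgf n).symm) this
  set a : (A →L[ℂ] A) := algebraMap ℂ (A →L[ℂ] A) z - T with ha
  have key : ∀ n : ℕ, a * ((z⁻¹) ^ (n + 1) • T ^ n) =
      (z⁻¹) ^ n • T ^ n - (z⁻¹) ^ (n + 1) • T ^ (n + 1) := by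
    intro n
    rw [ha, sub_mul, Algebra.algebraMap_eq_smul_one, smul_mul_assoc, one_mul, smul_smul, hzz,
      mul_smul_comm, ← pow_succ']
    
  have key' : ∀ n : ℕ, ((z⁻¹) ^ (n + 1) • T ^ n) * a =
      (z⁻¹) ^ n • T ^ n - (z⁻¹) ^ (n + 1) • T ^ (n + 1) := by
    intro n
    rw [ha, mul_sub, Algebra.algebraMap_eq_smul_one, mul_smul_comm, mul_one, smul_smul,
      hzz, smul_mul_assoc, ← pow_succ]
    
  have htel : Tendsto (fun N => ∑ i ∈ Finset.range N,
      ((z⁻¹) ^ i • T ^ i - (z⁻¹) ^ (i + 1) • T ^ (i + 1))) atTop (𝓝 1) := by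
    have hsum_range : ∀ N, ∑ i ∈ Finset.range N,
        ((z⁻¹) ^ i • T ^ i - (z⁻¹) ^ (i + 1) • T ^ (i + 1)) =
        (1 : A →L[ℂ] A) - (z⁻¹) ^ N • T ^ N := by
      intro N
      rw [Finset.sum_range_sub' (fun i => (z⁻¹) ^ i • T ^ i)]
      simp
    simp only [hsum_range]
    simpa using tendsto_const_nhds.sub hgtendsto
  have hleft : a * S = 1 := by
    have h1 : HasSum (fun n => a * ((z⁻¹) ^ (n + 1) • T ^ n)) (a * S) := hS.mul_left a
    simp only [key] at h1
    exact tendsto_nhds_unique h1.tendsto_sum_nat htel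
  have hright : S * a = 1 := by
    have h1 : HasSum (fun n => ((z⁻¹) ^ (n + 1) • T ^ n) * a) (S * a) := hS.mul_right a
    simp only [key'] at h1
    exact tendsto_nhds_unique h1.tendsto_sum_nat htel
  have hres : resolvent T z = S := by
    have : Ring.inverse a = S := Ring.inverse_unit ⟨a, S, hleft, hright⟩
    simpa [resolvent, ha] using this
  rw [hres]
  exact hS

private lemma complex_norm_of_nonneg' {w : ℂ} (hw : 0 ≤ w) : ‖w‖ = w.re := by
  obtain ⟨h1, h2⟩ := Complex.nonneg_iff.mp hw
  have h2' : w.im = 0 := h2.symm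
  rw [Complex.norm_def, Complex.normSq_apply, h2', mul_zero, add_zero,
    Real.sqrt_mul_self h1]

set_option maxHeartbeats 1000000 in
/-- Key estimate for the maximality of the pole order at `r(T)`: for a positive operator `T`
on a C*-algebra with `r := r(T) > 0`, `α ∈ ℂ` with `|α| = r`, `μ > r` and `λ := (μ/r)·α`,
for every `m`, every positive functional `φ` with `‖φ‖ ≤ 1` and positive `x` with `‖x‖ ≤ 1`,
`|λ - α|^m · |φ(R(λ,T)x)| ≤ (μ - r)^m · ‖R(μ,T)‖`. -/
theorem pole_estimate_of_positive
    {A : Type*} [NonUnitalCStarAlgebra A] [PartialOrder A] [StarOrderedRing A]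
    (T : A →L[ℂ] A) (hT : ∀ x : A, 0 ≤ x → 0 ≤ T x)
    (r : ℝ) (hr : r = (spectralRadius ℂ T).toReal) (hrpos : 0 < r)
    (α : ℂ) (hα : ‖α‖ = r)
    (μ : ℝ) (hμ : r < μ)
    (lam : ℂ) (hlam : lam = ((μ / r : ℝ) : ℂ) * α)
    (m : ℕ)
    (φ : A →L[ℂ] ℂ) (hφpos : ∀ y : A, 0 ≤ y → 0 ≤ φ y) (hφnorm : ‖φ‖ ≤ 1)
    (x : A) (hx : 0 ≤ x) (hxnorm : ‖x‖ ≤ 1) :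
    ‖lam - α‖ ^ m * ‖φ (resolvent T lam x)‖ ≤
      (μ - r) ^ m * ‖resolvent T ((μ : ℝ) : ℂ)‖ := by
  have hr0 : r ≠ 0 := hrpos.ne'
  have hμ0 : 0 < μ := hrpos.trans hμ
  have hnetop : spectralRadius ℂ T ≠ ⊤ := by
    intro h
    rw [h, ENNReal.toReal_top] at hr
    exact absurd hr hrpos.ne'
  have hsr : spectralRadius ℂ T = ENNReal.ofReal r := by
    rw [hr, ENNReal.ofReal_toReal hnetop]
  have hlt : ∀ {z : ℂ}, ‖z‖ = μ → spectralRadius ℂ T < ENNReal.ofReal ‖z‖ := by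
    intro z hznorm
    rw [hsr, hznorm]
    exact (ENNReal.ofReal_lt_ofReal_iff hμ0).mpr hμ
  have hnormlam : ‖lam‖ = μ := by
    rw [hlam, norm_mul, Complex.norm_real, hα, Real.norm_eq_abs,
      abs_of_pos (div_pos hμ0 hrpos), div_mul_cancel₀ _ hr0]
  have hnormmu : ‖((μ : ℝ) : ℂ)‖ = μ := by
    rw [Complex.norm_real, Real.norm_eq_abs, abs_of_pos hμ0]
  have hdiff : ‖lam - α‖ = μ - r := by
    have heq : lam - α = (((μ - r) / r : ℝ) : ℂ) * α := by
      rw [hlam]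
      have hrC : (r : ℂ) ≠ 0 := by exact_mod_cast hr0
      push_cast
      field_simp
    rw [heq, norm_mul, Complex.norm_real, hα, Real.norm_eq_abs,
      abs_of_pos (div_pos (by linarith) hrpos), div_mul_cancel₀ _ hr0]
  rw [hdiff]
  refine mul_le_mul_of_nonneg_left ?_ (pow_nonneg (by linarith) m)
  have hpos : ∀ n : ℕ, (0 : A) ≤ (T ^ n) x := by
    intro n
    induction n with
    | zero => simpa using hx
    | succ n ih =>
      rw [pow_succ']
      exact hT _ ih
  set w : ℕ → ℂ := fun n => φ ((T ^ n) x) with hw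
  have hwpos : ∀ n, 0 ≤ w n := fun n => hφpos _ (hpos n)
  have hwre : ∀ n, ‖w n‖ = (w n).re := fun n => complex_norm_of_nonneg' (hwpos n)
  set E : (A →L[ℂ] A) →L[ℂ] ℂ := φ.comp ((ContinuousLinearMap.apply ℂ A) x) with hE
  have hEapp : ∀ (S : A →L[ℂ] A), E S = φ (S x) := fun S => rfl
  have h1 : HasSum (fun n : ℕ => (lam⁻¹) ^ (n + 1) * w n) (φ (resolvent T lam x)) := by
    have := (hasSum_resolvent_aux T (hlt hnormlam)).mapL E
    simpa [hEapp, hw, hE, smul_eq_mul] using this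
  have h2 : HasSum (fun n : ℕ => (((μ : ℝ) : ℂ)⁻¹) ^ (n + 1) * w n)
      (φ (resolvent T ((μ : ℝ) : ℂ) x)) := by
    have := (hasSum_resolvent_aux T (hlt hnormmu)).mapL E
    simpa [hEapp, hw, hE, smul_eq_mul] using this
  have h2re : HasSum (fun n : ℕ => ((((μ : ℝ) : ℂ)⁻¹) ^ (n + 1) * w n).re)
      ((φ (resolvent T ((μ : ℝ) : ℂ) x)).re) := Complex.reCLM.hasSum h2
  have hterm : ∀ n : ℕ, ‖(lam⁻¹) ^ (n + 1) * w n‖ = ((((μ : ℝ) : ℂ)⁻¹) ^ (n + 1) * w n).re := by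
    intro n
    have hcast : (((μ : ℝ) : ℂ)⁻¹) ^ (n + 1) = (((μ⁻¹ ^ (n + 1) : ℝ)) : ℂ) := by push_cast; ring
    rw [norm_mul, norm_pow, norm_inv, hnormlam, hcast, Complex.re_ofReal_mul, hwre n]
  calc ‖φ (resolvent T lam x)‖
      ≤ ∑' n, ‖(lam⁻¹) ^ (n + 1) * w n‖ := by
        rw [← h1.tsum_eq]
        exact norm_tsum_le_tsum_norm (by simpa only [hterm] using h2re.summable)
    _ = (φ (resolvent T ((μ : ℝ) : ℂ) x)).re := by
        rw [← h2re.tsum_eq]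
        exact tsum_congr hterm
    _ ≤ ‖φ (resolvent T ((μ : ℝ) : ℂ) x)‖ := Complex.re_le_norm _
    _ ≤ ‖φ‖ * ‖resolvent T ((μ : ℝ) : ℂ) x‖ := φ.le_opNorm _
    _ ≤ 1 * (‖resolvent T ((μ : ℝ) : ℂ)‖ * ‖x‖) :=
        mul_le_mul hφnorm ((resolvent T ((μ : ℝ) : ℂ)).le_opNorm x) (norm_nonneg _) zero_le_one
    _ ≤ ‖resolvent T ((μ : ℝ) : ℂ)‖ := by
        rw [one_mul]
        calc ‖resolvent T ((μ : ℝ) : ℂ)‖ * ‖x‖ ≤ ‖resolvent T ((μ : ℝ) : ℂ)‖ * 1 :=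
              mul_le_mul_of_nonneg_left hxnorm (norm_nonneg _)
          _ = _ := mul_one _
end
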